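/- arXiv:1709.05535 — 6 statements merged into one kernel-verified Lean document; each statement's English description precedes it below -/
import Mathlib

section
/- Let P = RN be a parabolic-type group with N = 1+J, λ ∈ J* with right N-stabilizer subalgebra J_{λ,rt} = {x ∈ J : λ(xJ)=0}, and let R° ≤ R be a subgroup fixing λ under both left and right actions (λ(rx) = λ(x) = λ(xr) for all x ∈ J, r ∈ R°). Let P_λ = R°·(1+J_{λ,rt}), so every element of P_λ is uniquely g = r + x with r ∈ R°, x ∈ J_{λ,rt}. Fix a nontrivial additive character ε: F_q → ℂ* and a representation T of R° with character θ. Then Ξ(g) = T(r)·ε^{λ(x)} for g = r + x defines a representation of P_λ, i.e. Ξ(gg') = Ξ(g)Ξ(g') for all g, g' ∈ P_λ. -/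
noncomputable section

/-- with `P_λ = R°·(1+J_{λ,rt})`, every element written uniquely `g = r + x`,
`Ξ(g) = ε^{λ(x)} • T(r)` defines a representation of `P_λ`: the product `g g' = r r' + z`
has `J_{λ,rt}`-component `z = r x' + x r' + x x'` lying in `J_{λ,rt}`, and
`Ξ(g g') = Ξ(g) Ξ(g')`. -/
theorem stmt5 (F : Type) [Field F] [Fintype F]
    (A : Type) [Ring A] [Algebra F A]
    (J : NonUnitalSubalgebra F A)
    (hnil : ∀ x ∈ J, IsNilpotent x)
    (l : A →ₗ[F] F)
    (Rcirc : Subgroup Aˣ)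
    -- `J` is invariant under left and right multiplication by `R°`
    (hJinv : ∀ r ∈ Rcirc, ∀ x ∈ J, ((r : A) * x ∈ J) ∧ (x * (r : A) ∈ J))
    -- `R°` fixes `λ` under both the left and the right action
    (hStab : ∀ r ∈ Rcirc, ∀ x ∈ J, l ((r : A) * x) = l x ∧ l (x * (r : A)) = l x)
    (ε : AddChar F ℂ) (hε : ∃ t, ε t ≠ 1)
    (d : ℕ) (T : Rcirc →* Matrix (Fin d) (Fin d) ℂ) :
    ∀ (r r' : Rcirc) (x x' : A),
      (x ∈ J ∧ ∀ y ∈ J, l (x * y) = 0) →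
      (x' ∈ J ∧ ∀ y ∈ J, l (x' * y) = 0) →
      -- the product decomposes again in `P_λ`:
      (((r : Aˣ) : A) + x) * (((r' : Aˣ) : A) + x')
          = (((r * r' : Rcirc) : Aˣ) : A)
            + (((r : Aˣ) : A) * x' + x * ((r' : Aˣ) : A) + x * x') ∧
      ((((r : Aˣ) : A) * x' + x * ((r' : Aˣ) : A) + x * x') ∈ J ∧
        ∀ y ∈ J, l ((((r : Aˣ) : A) * x' + x * ((r' : Aˣ) : A) + x * x') * y) = 0) ∧
      -- multiplicativity `Ξ(gg') = Ξ(g)Ξ(g')`: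
      ε (l (((r : Aˣ) : A) * x' + x * ((r' : Aˣ) : A) + x * x')) • T (r * r')
        = (ε (l x) • T r) * (ε (l x') • T r') := by
  intro r r' x x' ⟨hxJ, hx⟩ ⟨hx'J, hx'⟩
  refine ⟨by push_cast; noncomm_ring, ⟨?_, ?_⟩, ?_⟩
  · exact J.add_mem (J.add_mem (hJinv r r.2 x' hx'J).1 (hJinv r' r'.2 x hxJ).2)
      (J.mul_mem hxJ hx'J)
  · intro y hy
    have h1 : l (((r : Aˣ) : A) * x' * y) = 0 := by
      rw [mul_assoc, (hStab r r.2 _ (J.mul_mem hx'J hy)).1]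
      exact hx' y hy
    have h2 : l (x * ((r' : Aˣ) : A) * y) = 0 := by
      rw [mul_assoc]; exact hx _ ((hJinv r' r'.2 y hy).1)
    have h3 : l (x * x' * y) = 0 := by
      rw [mul_assoc]; exact hx _ (J.mul_mem hx'J hy)
    simp [add_mul, map_add, h1, h2, h3]
  · have hl : l (((r : Aˣ) : A) * x' + x * ((r' : Aˣ) : A) + x * x') = l x + l x' := by
      rw [map_add, map_add, (hStab r r.2 x' hx'J).1, (hStab r' r'.2 x hxJ).2, hx x' hx'J]
      ring
    rw [hl, map_mul, AddChar.map_add_eq_mul, smul_mul_smul_comm]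
end
end

section
/- The induced character χ_{λ,θ} = Ind_{P_λ}^P ξ_{λ,θ} is constant on each equivalence class K(g) = {1 + ra(g−1)br⁻¹ : r ∈ R, a, b ∈ N} of P. -/
open scoped Classical BigOperators

set_option linter.unusedSectionVars false
set_option linter.unusedVariables false

set_option maxHeartbeats 1000000
noncomputable section


section Aux

variable {F : Type} [Field F] [Fintype F] {A : Type} [Ring A] [Algebra F A] [Fintype A]

def fAux (J : NonUnitalSubalgebra F A) (Rcirc : Subgroup Aˣ) (l : A →ₗ[F] F)
    (ξ : A → ℂ) (p : A) : ℂ :=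
  if ∃ r ∈ Rcirc, ∃ x : A, (x ∈ J ∧ ∀ y ∈ J, l (x * y) = 0) ∧ p = (r : A) + x
  then ξ p else 0

def Sset (R : Subgroup Aˣ) (J : NonUnitalSubalgebra F A) : Set Aˣ :=
  {s : Aˣ | ∃ r ∈ R, ∃ x ∈ J, (s : A) = (r : A) * (1 + x)}

lemma one_add_inv (J : NonUnitalSubalgebra F A) {x : A} (hx : x ∈ J)
    (hn : IsNilpotent x) :
    ∃ x' ∈ J, (1 + x) * (1 + x') = 1 ∧ (1 + x') * (1 + x) = 1 := by
  obtain ⟨n, hn⟩ := hn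
  have hpow : ∀ i : ℕ, (-x) ^ (i + 1) ∈ J := by
    intro i
    induction i with
    | zero => simpa using neg_mem hx
    | succ k ih => rw [pow_succ]; exact mul_mem ih (neg_mem hx)
  have hx1 : x ^ (n + 1) = 0 := by rw [pow_succ, hn, zero_mul]
  have hxn : (-x) ^ (n + 1) = 0 := by rw [neg_pow, hx1, mul_zero]
  have hG : (1 : A) + ∑ i ∈ Finset.range n, (-x) ^ (i + 1)
      = ∑ i ∈ Finset.range (n + 1), (-x) ^ i := by
    rw [Finset.sum_range_succ', pow_zero, add_comm]
  refine ⟨∑ i ∈ Finset.range n, (-x) ^ (i + 1), sum_mem (fun i _ => hpow i), ?_, ?_⟩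
  · rw [hG]
    have := mul_geom_sum (-x) (n + 1)
    have h2 : (1 + x : A) = -(-x - 1) := by noncomm_ring
    rw [h2, neg_mul, this, hxn, zero_sub, neg_neg]
  · rw [hG]
    have := geom_sum_mul (-x) (n + 1)
    have h2 : (1 + x : A) = -(-x - 1) := by noncomm_ring
    rw [h2, mul_neg, this, hxn, zero_sub, neg_neg]

lemma Sset_mul {R : Subgroup Aˣ} {J : NonUnitalSubalgebra F A}
    (hJinv : ∀ r ∈ R, ∀ x ∈ J, ((r : A) * x ∈ J) ∧ (x * (r : A) ∈ J))
    {s t : Aˣ} (hs : s ∈ Sset R J) (ht : t ∈ Sset R J) : s * t ∈ Sset R J := by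
  obtain ⟨r1, hr1, x1, hx1, he1⟩ := hs
  obtain ⟨r2, hr2, x2, hx2, he2⟩ := ht
  have hw : ((r2⁻¹ : Aˣ) : A) * x1 * (r2 : A) ∈ J :=
    (hJinv r2 hr2 _ (hJinv r2⁻¹ (R.inv_mem hr2) x1 hx1).1).2
  refine ⟨r1 * r2, R.mul_mem hr1 hr2, ((r2⁻¹ : Aˣ) : A) * x1 * (r2 : A) + x2
    + ((r2⁻¹ : Aˣ) : A) * x1 * (r2 : A) * x2, add_mem (add_mem hw hx2) (mul_mem hw hx2), ?_⟩
  have key : (r2 : A) * (((r2⁻¹ : Aˣ) : A) * x1 * (r2 : A)) = x1 * (r2 : A) := by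
    rw [← mul_assoc, ← mul_assoc, Units.mul_inv, one_mul]
  push_cast
  calc ((s : A)) * (t : A) = (r1 : A) * (1 + x1) * ((r2 : A) * (1 + x2)) := by rw [he1, he2]
    _ = (r1 : A) * (((r2 : A) + x1 * (r2 : A)) * (1 + x2)) := by noncomm_ring
    _ = (r1 : A) * (((r2 : A) + (r2 : A) * (((r2⁻¹ : Aˣ) : A) * x1 * (r2 : A))) * (1 + x2)) := by
        rw [key]
    _ = (r1 : A) * (r2 : A) * (1 + (((r2⁻¹ : Aˣ) : A) * x1 * (r2 : A) + x2
        + ((r2⁻¹ : Aˣ) : A) * x1 * (r2 : A) * x2)) := by noncomm_ring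

lemma Sset_inv {R : Subgroup Aˣ} {J : NonUnitalSubalgebra F A}
    (hnil : ∀ x ∈ J, IsNilpotent x)
    (hJinv : ∀ r ∈ R, ∀ x ∈ J, ((r : A) * x ∈ J) ∧ (x * (r : A) ∈ J))
    {s : Aˣ} (hs : s ∈ Sset R J) : s⁻¹ ∈ Sset R J := by
  obtain ⟨r, hr, x, hx, he⟩ := hs
  obtain ⟨x', hx', h1, h2⟩ := one_add_inv J hx (hnil x hx)
  have hinv : ((s⁻¹ : Aˣ) : A) = (1 + x') * ((r⁻¹ : Aˣ) : A) := by
    have : (s : A) * ((1 + x') * ((r⁻¹ : Aˣ) : A)) = 1 := by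
      rw [he]
      calc (r : A) * (1 + x) * ((1 + x') * ((r⁻¹ : Aˣ) : A))
          = (r : A) * ((1 + x) * (1 + x')) * ((r⁻¹ : Aˣ) : A) := by noncomm_ring
        _ = 1 := by rw [h1, mul_one, Units.mul_inv]
    calc ((s⁻¹ : Aˣ) : A) = ((s⁻¹ : Aˣ) : A) * ((s : A) * ((1 + x') * ((r⁻¹ : Aˣ) : A))) := by
          rw [this, mul_one]
      _ = (((s⁻¹ : Aˣ) : A) * (s : A)) * ((1 + x') * ((r⁻¹ : Aˣ) : A)) := by rw [mul_assoc]
      _ = (1 + x') * ((r⁻¹ : Aˣ) : A) := by rw [Units.inv_mul, one_mul]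
  have hw : (r : A) * x' * ((r⁻¹ : Aˣ) : A) ∈ J :=
    (hJinv r⁻¹ (R.inv_mem hr) _ (hJinv r hr x' hx').1).2
  refine ⟨r⁻¹, R.inv_mem hr, (r : A) * x' * ((r⁻¹ : Aˣ) : A), hw, ?_⟩
  rw [hinv]
  calc (1 + x') * ((r⁻¹ : Aˣ) : A)
      = ((r⁻¹ : Aˣ) : A) + x' * ((r⁻¹ : Aˣ) : A) := by noncomm_ring
    _ = ((r⁻¹ : Aˣ) : A) + (((r⁻¹ : Aˣ) : A) * (r : A)) * x' * ((r⁻¹ : Aˣ) : A) := by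
        rw [Units.inv_mul, one_mul]
    _ = ((r⁻¹ : Aˣ) : A) * (1 + (r : A) * x' * ((r⁻¹ : Aˣ) : A)) := by noncomm_ring

lemma Sset_conj_mem {R : Subgroup Aˣ} {J : NonUnitalSubalgebra F A}
    (hnil : ∀ x ∈ J, IsNilpotent x)
    (hJinv : ∀ r ∈ R, ∀ x ∈ J, ((r : A) * x ∈ J) ∧ (x * (r : A) ∈ J))
    {s : Aˣ} (hs : s ∈ Sset R J) {z : A} (hz : z ∈ J) :
    ((s⁻¹ : Aˣ) : A) * z * (s : A) ∈ J := by
  obtain ⟨r, hr, x, hx, he⟩ := hs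
  obtain ⟨r', hr', x', hx', he'⟩ := Sset_inv hnil hJinv ⟨r, hr, x, hx, he⟩
  have m1 : z * (r : A) ∈ J := (hJinv r hr z hz).2
  have m2 : z * (r : A) * (1 + x) ∈ J := by
    rw [mul_one_add]; exact add_mem m1 (mul_mem m1 hx)
  have m3 : (1 + x') * (z * (r : A) * (1 + x)) ∈ J := by
    rw [one_add_mul]; exact add_mem m2 (mul_mem hx' m2)
  have m4 : (r' : A) * ((1 + x') * (z * (r : A) * (1 + x))) ∈ J := (hJinv r' hr' _ m3).1
  have : ((s⁻¹ : Aˣ) : A) * z * (s : A)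
      = (r' : A) * ((1 + x') * (z * (r : A) * (1 + x))) := by
    rw [he', he]; noncomm_ring
  rw [this]; exact m4

lemma conj_reduce (u w g c : A) (huw : u * w = 1) (hwu : w * u = 1) :
    u * (1 + (g - 1) * c) * w = 1 + (u * (g - 1) * w) * (1 + u * (c - 1) * w) := by
  have h1 : u * (1 + (g - 1) * c) * w
      = u * w + u * (g - 1) * ((c - 1) + 1) * w := by noncomm_ring
  have h2 : 1 + (u * (g - 1) * w) * (1 + u * (c - 1) * w)
      = 1 + (u * (g - 1) * w + u * (g - 1) * (w * u) * (c - 1) * w) := by noncomm_ring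
  rw [h1, h2, huw, hwu]
  noncomm_ring

lemma fAux_right_mul {R Rcirc : Subgroup Aˣ} {J : NonUnitalSubalgebra F A}
    (hnil : ∀ x ∈ J, IsNilpotent x)
    (hJinv : ∀ r ∈ R, ∀ x ∈ J, ((r : A) * x ∈ J) ∧ (x * (r : A) ∈ J))
    {l : A →ₗ[F] F} (hle : Rcirc ≤ R)
    (hStab : ∀ r ∈ Rcirc, ∀ x ∈ J, l ((r : A) * x) = l x ∧ l (x * (r : A)) = l x)
    {ε : AddChar F ℂ} {θ : Rcirc → ℂ} {ξ : A → ℂ}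
    (hξ : ∀ (r : Aˣ) (hr : r ∈ Rcirc), ∀ x : A, (x ∈ J ∧ ∀ y ∈ J, l (x * y) = 0) →
      ξ ((r : A) + x) = θ ⟨r, hr⟩ * ε (l x))
    (v : A) {y : A} (hy : y ∈ J) :
    fAux J Rcirc l ξ (1 + v * (1 + y)) = fAux J Rcirc l ξ (1 + v) := by
  have key : ∀ v : A, ∀ y ∈ J, ∀ rr : Aˣ, rr ∈ Rcirc → ∀ x : A,
      (x ∈ J ∧ ∀ z ∈ J, l (x * z) = 0) → 1 + v = (rr : A) + x →
      ∃ x2 : A, (x2 ∈ J ∧ ∀ z ∈ J, l (x2 * z) = 0) ∧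
        1 + v * (1 + y) = (rr : A) + x2 ∧ l x2 = l x := by
    intro v y hy rr hrr x hxL hv
    obtain ⟨hxJ, hxl⟩ := hxL
    refine ⟨x + (((rr : A) * y - y) + x * y), ⟨?_, ?_⟩, ?_, ?_⟩
    · exact add_mem hxJ (add_mem (sub_mem (hJinv rr (hle hrr) y hy).1 hy) (mul_mem hxJ hy))
    · intro z hz
      have e : (x + (((rr : A) * y - y) + x * y)) * z
          = x * z + (((rr : A) * (y * z) - y * z) + x * (y * z)) := by noncomm_ring
      rw [e, map_add, map_add, map_sub, hxl z hz, (hStab rr hrr (y * z) (mul_mem hy hz)).1,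
        hxl (y * z) (mul_mem hy hz)]
      ring
    · have hv' : v = (rr : A) + x - 1 := by rw [← hv]; abel
      rw [hv']; noncomm_ring
    · rw [map_add, map_add, map_sub, (hStab rr hrr y hy).1, hxl y hy]
      ring
  by_cases hC : ∃ rr ∈ Rcirc, ∃ x : A, (x ∈ J ∧ ∀ z ∈ J, l (x * z) = 0) ∧ 1 + v = (rr : A) + x
  · obtain ⟨rr, hrr, x, hxL, hv⟩ := hC
    obtain ⟨x2, hx2L, hv2, hlx2⟩ := key v y hy rr hrr x hxL hv
    unfold fAux
    rw [if_pos ⟨rr, hrr, x2, hx2L, hv2⟩, if_pos ⟨rr, hrr, x, hxL, hv⟩]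
    rw [hv2, hv, hξ rr hrr x2 hx2L, hξ rr hrr x hxL, hlx2]
  · have hC' : ¬ ∃ rr ∈ Rcirc, ∃ x : A, (x ∈ J ∧ ∀ z ∈ J, l (x * z) = 0) ∧
        1 + v * (1 + y) = (rr : A) + x := by
      rintro ⟨rr, hrr, x, hxL, hv⟩
      obtain ⟨y', hy', h1, h2⟩ := one_add_inv J hy (hnil y hy)
      obtain ⟨x2, hx2L, hv2, -⟩ := key (v * (1 + y)) y' hy' rr hrr x hxL hv
      rw [mul_assoc, h1, mul_one] at hv2
      exact hC ⟨rr, hrr, x2, hx2L, hv2⟩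
    unfold fAux
    rw [if_neg hC', if_neg hC]

lemma finsum_Sset_mul_left {R : Subgroup Aˣ} {J : NonUnitalSubalgebra F A}
    (hnil : ∀ x ∈ J, IsNilpotent x)
    (hJinv : ∀ r ∈ R, ∀ x ∈ J, ((r : A) * x ∈ J) ∧ (x * (r : A) ∈ J))
    {t : Aˣ} (ht : t ∈ Sset R J) (G : Aˣ → ℂ) :
    ∑ᶠ s ∈ Sset R J, G (t * s) = ∑ᶠ s ∈ Sset R J, G s := by
  refine finsum_mem_eq_of_bijOn (fun s => t * s) ⟨?_, ?_, ?_⟩ (fun x _ => rfl)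
  · intro s hs; exact Sset_mul hJinv ht hs
  · intro a _ b _ h; exact mul_left_cancel h
  · intro s hs
    exact ⟨t⁻¹ * s, Sset_mul hJinv (Sset_inv hnil hJinv ht) hs, by simp⟩

lemma finsum_conj {R Rcirc : Subgroup Aˣ} {J : NonUnitalSubalgebra F A}
    (hnil : ∀ x ∈ J, IsNilpotent x)
    (hJinv : ∀ r ∈ R, ∀ x ∈ J, ((r : A) * x ∈ J) ∧ (x * (r : A) ∈ J))
    {l : A →ₗ[F] F} {ξ : A → ℂ}
    {t : Aˣ} (ht : t ∈ Sset R J) (h : A) :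
    ∑ᶠ s ∈ Sset R J, fAux J Rcirc l ξ (((s⁻¹ : Aˣ) : A) * ((t : A) * h * ((t⁻¹ : Aˣ) : A)) * (s : A))
      = ∑ᶠ s ∈ Sset R J, fAux J Rcirc l ξ (((s⁻¹ : Aˣ) : A) * h * (s : A)) := by
  rw [← finsum_Sset_mul_left hnil hJinv ht
    (fun s => fAux J Rcirc l ξ (((s⁻¹ : Aˣ) : A) * ((t : A) * h * ((t⁻¹ : Aˣ) : A)) * (s : A)))]
  refine finsum_mem_congr rfl (fun s _ => ?_)
  congr 1
  simp [mul_assoc, Units.inv_mul_cancel_left]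

end Aux


/-- the induced character `χ_{λ,θ} = Ind_{P_λ}^P ξ_{λ,θ}` is constant on
each class `K(g) = {1 + r a (g−1) b r⁻¹ : r ∈ R, a,b ∈ N}` of `P = RN`. -/
theorem stmt7 (F : Type) [Field F] [Fintype F]
    (A : Type) [Ring A] [Algebra F A] [Fintype A]
    (J : NonUnitalSubalgebra F A)
    (hnil : ∀ x ∈ J, IsNilpotent x)
    (R : Subgroup Aˣ)
    -- `J` is invariant under left and right multiplication by elements of `P`
    (hJinv : ∀ r ∈ R, ∀ x ∈ J, ((r : A) * x ∈ J) ∧ (x * (r : A) ∈ J))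
    (l : A →ₗ[F] F)
    (Rcirc : Subgroup Aˣ) (hle : Rcirc ≤ R)
    -- `λ` is `R°`-bi-invariant
    (hStab : ∀ r ∈ Rcirc, ∀ x ∈ J, l ((r : A) * x) = l x ∧ l (x * (r : A)) = l x)
    (ε : AddChar F ℂ) (hε : ∃ t, ε t ≠ 1)
    (θ : Rcirc → ℂ)
    -- `θ` is the character of a representation `T` of `R°`
    (hθ : ∃ (d : ℕ) (T : Rcirc →* Matrix (Fin d) (Fin d) ℂ),
      ∀ r, θ r = Matrix.trace (T r))
    (ξ : A → ℂ)
    -- `ξ = ξ_{λ,θ}` on `P_λ = R°(1 + J_{λ,rt})`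
    (hξ : ∀ (r : Aˣ) (hr : r ∈ Rcirc), ∀ x : A, (x ∈ J ∧ ∀ y ∈ J, l (x * y) = 0) →
      ξ ((r : A) + x) = θ ⟨r, hr⟩ * ε (l x)) :
    ∀ g g' : A,
      -- `g ∈ P = RN`
      (∃ r ∈ R, ∃ x ∈ J, g = (r : A) * (1 + x)) →
      -- `g' ∈ K(g)`
      (∃ r ∈ R, ∃ a ∈ {a : A | ∃ x ∈ J, a = 1 + x}, ∃ b ∈ {a : A | ∃ x ∈ J, a = 1 + x},
        g' = 1 + (r : A) * a * (g - 1) * b * ((r⁻¹ : Aˣ) : A)) →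
      -- the induced characters agree: `χ(g') = χ(g)`
      ((Nat.card {p : A // ∃ r ∈ Rcirc, ∃ x : A,
            (x ∈ J ∧ ∀ y ∈ J, l (x * y) = 0) ∧ p = (r : A) + x} : ℂ)⁻¹ *
          ∑ᶠ s ∈ {s : Aˣ | ∃ r ∈ R, ∃ x ∈ J, (s : A) = (r : A) * (1 + x)},
            (if ∃ r ∈ Rcirc, ∃ x : A, (x ∈ J ∧ ∀ y ∈ J, l (x * y) = 0) ∧
                ((s⁻¹ : Aˣ) : A) * g' * (s : A) = (r : A) + x
              then ξ (((s⁻¹ : Aˣ) : A) * g' * (s : A)) else 0))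
        = ((Nat.card {p : A // ∃ r ∈ Rcirc, ∃ x : A,
            (x ∈ J ∧ ∀ y ∈ J, l (x * y) = 0) ∧ p = (r : A) + x} : ℂ)⁻¹ *
          ∑ᶠ s ∈ {s : Aˣ | ∃ r ∈ R, ∃ x ∈ J, (s : A) = (r : A) * (1 + x)},
            (if ∃ r ∈ Rcirc, ∃ x : A, (x ∈ J ∧ ∀ y ∈ J, l (x * y) = 0) ∧
                ((s⁻¹ : Aˣ) : A) * g * (s : A) = (r : A) + x
              then ξ (((s⁻¹ : Aˣ) : A) * g * (s : A)) else 0)) := by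
  intro g g' _ hg'
  obtain ⟨r, hrR, a, ⟨x, hxJ, ha⟩, b, ⟨y, hyJ, hb⟩, hg'eq⟩ := hg'
  subst ha; subst hb; subst hg'eq
  congr 1
  obtain ⟨x', hx'J, hxx'1, hxx'2⟩ := one_add_inv J hxJ (hnil x hxJ)
  have hmul : ((1 : A) + x) * (1 + x') = 1 := hxx'1
  set ua : Aˣ := ⟨1 + x, 1 + x', hxx'1, hxx'2⟩ with hua
  set t : Aˣ := r * ua with htdef
  have htval : (t : A) = (r : A) * (1 + x) := by rw [htdef, Units.val_mul]
  have htinv : ((t⁻¹ : Aˣ) : A) = (1 + x') * ((r⁻¹ : Aˣ) : A) := by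
    rw [htdef, mul_inv_rev, Units.val_mul]; rfl
  have htS : t ∈ Sset R J := ⟨r, hrR, x, hxJ, htval⟩
  have hconj : (1 : A) + (r : A) * (1 + x) * (g - 1) * (1 + y) * ((r⁻¹ : Aˣ) : A)
      = (t : A) * (1 + (g - 1) * ((1 + y) * (1 + x))) * ((t⁻¹ : Aˣ) : A) := by
    rw [htval, htinv]
    have expand : (r : A) * (1 + x) * (1 + (g - 1) * ((1 + y) * (1 + x)))
          * ((1 + x') * ((r⁻¹ : Aˣ) : A))
        = (r : A) * ((1 + x) * (1 + x')) * ((r⁻¹ : Aˣ) : A)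
          + (r : A) * (1 + x) * (g - 1) * (1 + y)
            * (((1 + x) * (1 + x')) * ((r⁻¹ : Aˣ) : A)) := by noncomm_ring
    rw [expand, hmul, mul_one, Units.mul_inv, one_mul]
  calc (∑ᶠ s ∈ Sset R J, fAux J Rcirc l ξ (((s⁻¹ : Aˣ) : A)
          * (1 + (r : A) * (1 + x) * (g - 1) * (1 + y) * ((r⁻¹ : Aˣ) : A)) * (s : A)))
      = ∑ᶠ s ∈ Sset R J, fAux J Rcirc l ξ (((s⁻¹ : Aˣ) : A)
          * ((t : A) * (1 + (g - 1) * ((1 + y) * (1 + x))) * ((t⁻¹ : Aˣ) : A)) * (s : A)) := by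
        rw [hconj]
    _ = ∑ᶠ s ∈ Sset R J, fAux J Rcirc l ξ (((s⁻¹ : Aˣ) : A)
          * (1 + (g - 1) * ((1 + y) * (1 + x))) * (s : A)) :=
        finsum_conj hnil hJinv htS _
    _ = ∑ᶠ s ∈ Sset R J, fAux J Rcirc l ξ (((s⁻¹ : Aˣ) : A) * g * (s : A)) := by
        refine finsum_mem_congr rfl (fun s hs => ?_)
        have huw : ((s⁻¹ : Aˣ) : A) * (s : A) = 1 := s.inv_mul
        have hwu : (s : A) * ((s⁻¹ : Aˣ) : A) = 1 := s.mul_inv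
        have hcJ : (1 + y) * (1 + x) - 1 ∈ J := by
          have e : ((1 : A) + y) * (1 + x) - 1 = y + x + y * x := by noncomm_ring
          rw [e]; exact add_mem (add_mem hyJ hxJ) (mul_mem hyJ hxJ)
        have hyc : ((s⁻¹ : Aˣ) : A) * ((1 + y) * (1 + x) - 1) * (s : A) ∈ J :=
          Sset_conj_mem hnil hJinv hs hcJ
        rw [conj_reduce _ _ _ _ huw hwu ]
        rw [fAux_right_mul hnil hJinv hle hStab hξ _ hyc]
        congr 1
        have e : ((s⁻¹ : Aˣ) : A) * g * (s : A)
            = ((s⁻¹ : Aˣ) : A) * (s : A) + ((s⁻¹ : Aˣ) : A) * (g - 1) * (s : A) := by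
          noncomm_ring
        rw [e, huw]
end
end

section
/- Let P be the parabolic subgroup of GL(n, F_q) of type (n₁,…,n_s), with Levi decomposition P = RN, R = GL(n₁)×…×GL(n_s), N = 1+J. Then every element x ∈ J is equivalent (under x ∼ raxbr⁻¹, r ∈ R, a,b ∈ N) to an element x_𝔻 associated with a block-rook placement 𝔻, i.e. a matrix supported on a union of non-attacking block-rooks A_k × A_ℓ (A_k ⊆ I_k, A_ℓ ⊆ I_ℓ, |A_k| = |A_ℓ|, k < ℓ) whose submatrix on each block-rook is invertible. -/
open scoped BigOperators

noncomputable section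

variable (F : Type) [Field F] [Fintype F] [DecidableEq F]

/-- The nilradical `J` of the parabolic subalgebra determined by the block map `f`:
strictly block upper triangular matrices. -/
def JSet {n s : ℕ} (f : Fin n → Fin s) : Set (Matrix (Fin n) (Fin n) F) :=
  {x | ∀ i j, ¬ f i < f j → x i j = 0}

/-- The unipotent radical `N = 1 + J`. -/
def NSet {n s : ℕ} (f : Fin n → Fin s) : Set (Matrix (Fin n) (Fin n) F) :=
  {a | ∃ x ∈ JSet F f, a = 1 + x}

/-- The Levi subgroup `R = GL(n₁) × … × GL(n_s)`: invertible block diagonal matrices. -/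
def RSet {n s : ℕ} (f : Fin n → Fin s) : Set (Matrix (Fin n) (Fin n) F) :=
  {r | IsUnit r ∧ ∀ i j, f i ≠ f j → r i j = 0}

/-- Equivalence on `J`: `x ∼ r a x b r⁻¹` for `r ∈ R`, `a, b ∈ N`. -/
def EquivJ {n s : ℕ} (f : Fin n → Fin s) (x x' : Matrix (Fin n) (Fin n) F) : Prop :=
  ∃ r ∈ RSet F f, ∃ a ∈ NSet F f, ∃ b ∈ NSet F f, x' = r * a * x * b * r⁻¹

namespace Stmt8Aux

open scoped Classical

set_option linter.unusedSectionVars false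

variable {F} {n s : ℕ} {f : Fin n → Fin s} {a b : Fin n}

/-- elementary matrix with single entry `t` at `(a,b)` -/
def El (t : F) (a b : Fin n) : Matrix (Fin n) (Fin n) F :=
  Matrix.of fun i j => if i = a ∧ j = b then t else 0

@[simp] lemma el_apply (t : F) (a b i j : Fin n) :
    El t a b i j = if i = a ∧ j = b then t else 0 := rfl

lemma el_mul_apply (t : F) (a b : Fin n) (x : Matrix (Fin n) (Fin n) F) (i j : Fin n) :
    (El t a b * x) i j = if i = a then t * x b j else 0 := by
  simp only [Matrix.mul_apply, el_apply]
  by_cases h : i = a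
  · subst h
    simp [ite_and]
  · simp [h]

lemma mul_el_apply (t : F) (a b : Fin n) (x : Matrix (Fin n) (Fin n) F) (i j : Fin n) :
    (x * El t a b) i j = if j = b then x i a * t else 0 := by
  simp only [Matrix.mul_apply, el_apply]
  by_cases h : j = b
  · subst h
    simp [ite_and]
  · simp [h]

lemma one_add_el_mul_apply (t : F) (a b : Fin n) (x : Matrix (Fin n) (Fin n) F) (i j : Fin n) :
    ((1 + El t a b) * x) i j = x i j + (if i = a then t * x b j else 0) := by
  rw [Matrix.add_mul, Matrix.one_mul, Matrix.add_apply, el_mul_apply]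

lemma mul_one_add_el_apply (t : F) (a b : Fin n) (x : Matrix (Fin n) (Fin n) F) (i j : Fin n) :
    (x * (1 + El t a b)) i j = x i j + (if j = b then x i a * t else 0) := by
  rw [Matrix.mul_add, Matrix.mul_one, Matrix.add_apply, mul_el_apply]

lemma one_add_el_mul_one_add_el (hab : a ≠ b) (t t' : F) :
    (1 + El t a b) * (1 + El t' a b) = 1 + El (t + t') a b := by
  ext i j
  rw [mul_one_add_el_apply]
  simp only [Matrix.add_apply, el_apply]
  by_cases hj : j = b
  · subst hj
    by_cases hi : i = a
    · subst hi
      simp [Matrix.one_apply, hab, hab.symm]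
    · simp [hi]
  · simp [hj]

lemma one_add_el_inv_mul (hab : a ≠ b) (t : F) :
    (1 + El t a b) * (1 + El (-t) a b) = 1 := by
  rw [one_add_el_mul_one_add_el hab]
  have : t + (-t) = 0 := by ring
  rw [this]
  ext i j
  simp [El]

lemma el_mem_J (t : F) (hfab : f a < f b) : El t a b ∈ JSet F f := by
  intro i j h
  simp only [el_apply, ite_eq_right_iff]
  rintro ⟨rfl, rfl⟩
  exact absurd hfab h


lemma J_add {x y : Matrix (Fin n) (Fin n) F} (hx : x ∈ JSet F f) (hy : y ∈ JSet F f) :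
    x + y ∈ JSet F f := by
  intro i j h
  simp [hx i j h, hy i j h]

lemma J_mul {x y : Matrix (Fin n) (Fin n) F} (hx : x ∈ JSet F f) (hy : y ∈ JSet F f) :
    x * y ∈ JSet F f := by
  intro i j h
  rw [Matrix.mul_apply]
  apply Finset.sum_eq_zero
  intro k _
  by_cases h1 : f i < f k
  · by_cases h2 : f k < f j
    · exact absurd (h1.trans h2) h
    · rw [hy k j h2, mul_zero]
  · rw [hx i k h1, zero_mul]

/-- block-diagonal matrices -/
def BD (f : Fin n → Fin s) : Set (Matrix (Fin n) (Fin n) F) :=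
  {r | ∀ i j, f i ≠ f j → r i j = 0}

lemma BD_mul_J {r x : Matrix (Fin n) (Fin n) F} (hr : r ∈ BD f) (hx : x ∈ JSet F f) :
    r * x ∈ JSet F f := by
  intro i j h
  rw [Matrix.mul_apply]
  apply Finset.sum_eq_zero
  intro k _
  by_cases h1 : f i = f k
  · by_cases h2 : f k < f j
    · exact absurd (h1 ▸ h2) h
    · rw [hx k j h2, mul_zero]
  · rw [hr i k h1, zero_mul]

lemma J_mul_BD {r x : Matrix (Fin n) (Fin n) F} (hr : r ∈ BD f) (hx : x ∈ JSet F f) :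
    x * r ∈ JSet F f := by
  intro i j h
  rw [Matrix.mul_apply]
  apply Finset.sum_eq_zero
  intro k _
  by_cases h1 : f k = f j
  · by_cases h2 : f i < f k
    · exact absurd (h1 ▸ h2) h
    · rw [hx i k h2, zero_mul]
  · rw [hr k j h1, mul_zero]

lemma one_mem_N : (1 : Matrix (Fin n) (Fin n) F) ∈ NSet F f :=
  ⟨0, fun i j _ => rfl, by rw [add_zero]⟩

lemma one_mem_R : (1 : Matrix (Fin n) (Fin n) F) ∈ RSet F f :=
  ⟨isUnit_one, fun i j h => Matrix.one_apply_ne (fun hij => h (by rw [hij]))⟩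

lemma N_mul {x y : Matrix (Fin n) (Fin n) F} (hx : x ∈ NSet F f) (hy : y ∈ NSet F f) :
    x * y ∈ NSet F f := by
  obtain ⟨u, hu, rfl⟩ := hx
  obtain ⟨v, hv, rfl⟩ := hy
  refine ⟨u + v + u * v, ?_, by noncomm_ring⟩
  exact J_add (J_add hu hv) (J_mul hu hv)

lemma one_add_mem_N {y : Matrix (Fin n) (Fin n) F} (hy : y ∈ JSet F f) :
    (1 + y) ∈ NSet F f := ⟨y, hy, rfl⟩

lemma one_add_el_mem_R (hab : a ≠ b) (hfab : f a = f b) (t : F) :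
    (1 + El t a b) ∈ RSet F f := by
  constructor
  · exact ⟨⟨1 + El t a b, 1 + El (-t) a b, one_add_el_inv_mul hab t,
      by simpa using one_add_el_inv_mul hab (-t)⟩, rfl⟩
  · intro i j h
    simp only [Matrix.add_apply, el_apply]
    rw [Matrix.one_apply_ne (fun hij => h (by rw [hij])), if_neg, add_zero]
    rintro ⟨rfl, rfl⟩
    exact h hfab

lemma R_mul {x y : Matrix (Fin n) (Fin n) F} (hx : x ∈ RSet F f) (hy : y ∈ RSet F f) :
    x * y ∈ RSet F f := by
  refine ⟨hx.1.mul hy.1, fun i j h => ?_⟩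
  rw [Matrix.mul_apply]
  apply Finset.sum_eq_zero
  intro k _
  by_cases h1 : f i = f k
  · by_cases h2 : f k = f j
    · exact absurd (h1.trans h2) h
    · rw [hy.2 k j h2, mul_zero]
  · rw [hx.2 i k h1, zero_mul]

lemma R_inv {r : Matrix (Fin n) (Fin n) F} (hr : r ∈ RSet F f) :
    r⁻¹ ∈ RSet F f ∧ r * r⁻¹ = 1 ∧ r⁻¹ * r = 1 := by
  have hdet := (Matrix.isUnit_iff_isUnit_det r).mp hr.1
  have h1 : r * r⁻¹ = 1 := Matrix.mul_nonsing_inv r hdet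
  have h2 : r⁻¹ * r = 1 := Matrix.nonsing_inv_mul r hdet
  set u := r⁻¹ with hu
  -- blockified inverse
  set w : Matrix (Fin n) (Fin n) F :=
    Matrix.of (fun i j => if f i = f j then u i j else 0) with hw
  have hrw : r * w = 1 := by
    ext i j
    by_cases hij : f i = f j
    · have : (r * w) i j = (r * u) i j := by
        rw [Matrix.mul_apply, Matrix.mul_apply]
        apply Finset.sum_congr rfl
        intro k _
        by_cases hk : f k = f j
        · simp [hw, hk]
        · rw [hr.2 i k (fun hik => hk (hik ▸ hij)), zero_mul, zero_mul]
      rw [this, h1]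
    · have : (r * w) i j = 0 := by
        rw [Matrix.mul_apply]
        apply Finset.sum_eq_zero
        intro k _
        by_cases hk : f k = f j
        · rw [hr.2 i k (fun hik => hij (hik ▸ hk)), zero_mul]
        · simp [hw, hk]
      rw [this]
      exact (Matrix.one_apply_ne (fun hij' => hij (by rw [hij']))).symm
  have huw : u = w := by rw [hu, Matrix.inv_eq_right_inv hrw]
  refine ⟨⟨?_, ?_⟩, h1, h2⟩
  · exact ⟨⟨r⁻¹, r, h2, h1⟩, rfl⟩
  · intro i j h
    rw [huw]
    simp [hw, h]

lemma equivJ_refl (x : Matrix (Fin n) (Fin n) F) : EquivJ F f x x := by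
  refine ⟨1, one_mem_R, 1, one_mem_N, 1, one_mem_N, ?_⟩
  rw [Matrix.inv_eq_right_inv (one_mul (1 : Matrix (Fin n) (Fin n) F))]
  simp

lemma equivJ_trans {x y z : Matrix (Fin n) (Fin n) F}
    (h1 : EquivJ F f x y) (h2 : EquivJ F f y z) : EquivJ F f x z := by
  obtain ⟨r, hr, a, ha, b, hb, rfl⟩ := h1
  obtain ⟨r', hr', a', ha', b', hb', rfl⟩ := h2
  obtain ⟨hrinv, hrr, hrr'⟩ := R_inv hr
  obtain ⟨u, hu, rfl⟩ := ha'
  obtain ⟨v, hv, rfl⟩ := hb'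
  refine ⟨r' * r, R_mul hr' hr, r⁻¹ * (1 + u) * r * a, ?_, b * (r⁻¹ * (1 + v) * r), ?_, ?_⟩
  · apply N_mul _ ha
    have : r⁻¹ * (1 + u) * r = 1 + r⁻¹ * u * r := by
      rw [Matrix.mul_add, Matrix.mul_one, Matrix.add_mul, hrr']
    rw [this]
    exact one_add_mem_N (J_mul_BD hr.2 (BD_mul_J hrinv.2 hu))
  · apply N_mul hb
    have : r⁻¹ * (1 + v) * r = 1 + r⁻¹ * v * r := by
      rw [Matrix.mul_add, Matrix.mul_one, Matrix.add_mul, hrr']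
    rw [this]
    exact one_add_mem_N (J_mul_BD hr.2 (BD_mul_J hrinv.2 hv))
  · rw [Matrix.mul_inv_rev]
    -- goal: r' * (1+u) * (r * a * x * b * r⁻¹) * (1+v) * r'⁻¹ =
    --       (r' * r) * (r⁻¹ * (1+u) * r * a) * x * (b * (r⁻¹ * (1+v) * r)) * (r⁻¹ * r'⁻¹)
    have e1 : r' * r * (r⁻¹ * (1 + u) * r * a) = r' * (1 + u) * (r * a) := by
      calc r' * r * (r⁻¹ * (1 + u) * r * a) = r' * (r * r⁻¹) * (1 + u) * r * a := by
            noncomm_ring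
        _ = r' * (1 + u) * (r * a) := by rw [hrr]; noncomm_ring
    have e2 : b * (r⁻¹ * (1 + v) * r) * (r⁻¹ * r'⁻¹) = b * r⁻¹ * (1 + v) * r'⁻¹ := by
      calc b * (r⁻¹ * (1 + v) * r) * (r⁻¹ * r'⁻¹)
          = b * r⁻¹ * (1 + v) * (r * r⁻¹) * r'⁻¹ := by noncomm_ring
        _ = b * r⁻¹ * (1 + v) * r'⁻¹ := by rw [hrr]; noncomm_ring
    calc r' * (1 + u) * (r * a * x * b * r⁻¹) * (1 + v) * r'⁻¹
        = (r' * r * (r⁻¹ * (1 + u) * r * a)) * x * (b * (r⁻¹ * (1 + v) * r) * (r⁻¹ * r'⁻¹)) := by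
          rw [e1, e2]; noncomm_ring
      _ = r' * r * (r⁻¹ * (1 + u) * r * a) * x * (b * (r⁻¹ * (1 + v) * r)) * (r⁻¹ * r'⁻¹) := by
          noncomm_ring

lemma equivJ_conj {r B x : Matrix (Fin n) (Fin n) F} (hr : r ∈ RSet F f)
    (h1 : r * B = 1) : EquivJ F f x (r * x * B) := by
  refine ⟨r, hr, 1, one_mem_N, 1, one_mem_N, ?_⟩
  rw [Matrix.inv_eq_right_inv h1]
  simp [Matrix.mul_assoc]

lemma equivJ_aNb {a b x : Matrix (Fin n) (Fin n) F} (ha : a ∈ NSet F f) (hb : b ∈ NSet F f) :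
    EquivJ F f x (a * x * b) := by
  refine ⟨1, one_mem_R, a, ha, b, hb, ?_⟩
  rw [Matrix.inv_eq_right_inv (one_mul (1 : Matrix (Fin n) (Fin n) F))]
  simp

lemma equivJ_J {x y : Matrix (Fin n) (Fin n) F} (hx : x ∈ JSet F f)
    (h : EquivJ F f x y) : y ∈ JSet F f := by
  obtain ⟨r, hr, a, ha, b, hb, rfl⟩ := h
  obtain ⟨u, hu, rfl⟩ := ha
  obtain ⟨v, hv, rfl⟩ := hb
  obtain ⟨hrinv, -, -⟩ := R_inv hr
  have hmid : (1 + u) * x * (1 + v) ∈ JSet F f := by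
    have : (1 + u) * x * (1 + v) = x + (u * x + (x * v + u * x * v)) := by noncomm_ring
    rw [this]
    exact J_add hx (J_add (J_mul hu hx) (J_add (J_mul hx hv) (J_mul (J_mul hu hx) hv)))
  have : r * (1 + u) * x * (1 + v) * r⁻¹ = r * ((1 + u) * x * (1 + v)) * r⁻¹ := by
    noncomm_ring
  rw [this]
  exact J_mul_BD hrinv.2 (BD_mul_J hr.2 hmid)


/-- Chain certificate allowing the row operation `row a += t ⬝ row b` (on columns `≤ c`)
to be realized by the equivalence.  `d` is the unique column `≤ c` where row `b` may be
nonzero. -/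
inductive LC (f : Fin n → Fin s) (c : ℕ) (x : Matrix (Fin n) (Fin n) F) :
    Fin n → Fin n → Fin n → Prop
  | done (d a b : Fin n)
      (hfab : f a = f b) (hab : a ≠ b) (hfd : f a < f d)
      (hac : (a : ℕ) ≤ c) (hbc : (b : ℕ) ≤ c)
      (hrowb : ∀ j : Fin n, (j : ℕ) ≤ c → j ≠ d → x b j = 0)
      (hcola : ∀ i, x i a = 0) : LC f c x d a b
  | nop (d a b ρa ρb : Fin n)
      (hfab : f a = f b) (hab : a ≠ b) (hfd : f a < f d)
      (hac : (a : ℕ) ≤ c) (hbc : (b : ℕ) ≤ c)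
      (hrowb : ∀ j : Fin n, (j : ℕ) ≤ c → j ≠ d → x b j = 0)
      (hcola : ∀ i, i ≠ ρa → x i a = 0) (hpa : x ρa a ≠ 0)
      (hrowρb : ∀ j : Fin n, (j : ℕ) ≤ c → j ≠ b → x ρb j = 0) (hq : x ρb b ≠ 0)
      (hfρa : f ρa < f a) (hfρb : f ρb < f b)
      (hfρ : f ρa < f ρb) : LC f c x d a b
  | step (d a b ρa ρb : Fin n)
      (hfab : f a = f b) (hab : a ≠ b) (hfd : f a < f d)
      (hac : (a : ℕ) ≤ c) (hbc : (b : ℕ) ≤ c)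
      (hrowb : ∀ j : Fin n, (j : ℕ) ≤ c → j ≠ d → x b j = 0)
      (hcola : ∀ i, i ≠ ρa → x i a = 0) (hpa : x ρa a ≠ 0)
      (hq : x ρb b ≠ 0)
      (hfρa : f ρa < f a) (hfρb : f ρb < f b)
      (hfρ : f ρa = f ρb)
      (sub : LC f c x b ρa ρb) : LC f c x d a b

lemma LC.hfab' {c : ℕ} {x : Matrix (Fin n) (Fin n) F} {d a b : Fin n}
    (h : LC f c x d a b) : f a = f b := by cases h <;> assumption

lemma LC.hab' {c : ℕ} {x : Matrix (Fin n) (Fin n) F} {d a b : Fin n}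
    (h : LC f c x d a b) : a ≠ b := by cases h <;> assumption

lemma LC.hrowb' {c : ℕ} {x : Matrix (Fin n) (Fin n) F} {d a b : Fin n}
    (h : LC f c x d a b) : ∀ j : Fin n, (j : ℕ) ≤ c → j ≠ d → x b j = 0 := by
  cases h <;> assumption

lemma LC.hac' {c : ℕ} {x : Matrix (Fin n) (Fin n) F} {d a b : Fin n}
    (h : LC f c x d a b) : (a : ℕ) ≤ c := by cases h <;> assumption

lemma LC.hfd' {c : ℕ} {x : Matrix (Fin n) (Fin n) F} {d a b : Fin n}
    (h : LC f c x d a b) : f a < f d := by cases h <;> assumption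

/-- LC is preserved when passing to a matrix that agrees on the relevant region. -/
lemma LC.mono {c : ℕ} {x x₁ : Matrix (Fin n) (Fin n) F} {d a b : Fin n}
    (h : LC f c x d a b)
    (Hcol : ∀ i j : Fin n, (j : ℕ) ≤ c → f j ≤ f a → x₁ i j = x i j)
    (Hrow : ∀ i j : Fin n, (j : ℕ) ≤ c → f i ≤ f a → i ≠ a → x₁ i j = x i j) :
    LC f c x₁ d a b := by
  induction h with
  | done d a b hfab hab hfd hac hbc hrowb hcola =>
      refine LC.done d a b hfab hab hfd hac hbc ?_ ?_
      · intro j hj hjd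
        rw [Hrow b j hj (le_of_eq hfab.symm) hab.symm]
        exact hrowb j hj hjd
      · intro i
        rw [Hcol i a hac (le_refl _)]
        exact hcola i
  | nop d a b ρa ρb hfab hab hfd hac hbc hrowb hcola hpa hrowρb hq hfρa hfρb hfρ =>
      refine LC.nop d a b ρa ρb hfab hab hfd hac hbc ?_ ?_ ?_ ?_ ?_ hfρa hfρb hfρ
      · intro j hj hjd
        rw [Hrow b j hj (le_of_eq hfab.symm) hab.symm]; exact hrowb j hj hjd
      · intro i hi
        rw [Hcol i a hac (le_refl _)]; exact hcola i hi
      · rw [Hcol ρa a hac (le_refl _)]; exact hpa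
      · intro j hj hjb
        rw [Hrow ρb j hj (le_of_lt (hfρb.trans_eq hfab.symm))
          (fun h' => absurd (h' ▸ hfρb) (by rw [← hfab]; exact lt_irrefl _))]
        exact hrowρb j hj hjb
      · rw [Hrow ρb b hbc (le_of_lt (hfρb.trans_eq hfab.symm))
          (fun h' => absurd (h' ▸ hfρb) (by rw [← hfab]; exact lt_irrefl _))]
        exact hq
  | step d a b ρa ρb hfab hab hfd hac hbc hrowb hcola hpa hq hfρa hfρb hfρ sub ih =>
      refine LC.step d a b ρa ρb hfab hab hfd hac hbc ?_ ?_ ?_ ?_ hfρa hfρb hfρ ?_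
      · intro j hj hjd
        rw [Hrow b j hj (le_of_eq hfab.symm) hab.symm]; exact hrowb j hj hjd
      · intro i hi
        rw [Hcol i a hac (le_refl _)]; exact hcola i hi
      · rw [Hcol ρa a hac (le_refl _)]; exact hpa
      · rw [Hrow ρb b hbc (le_of_lt (hfρb.trans_eq hfab.symm))
          (fun h' => absurd (h' ▸ hfρb) (by rw [← hfab]; exact lt_irrefl _))]
        exact hq
      · apply ih
        · intro i j hj hfj
          exact Hcol i j hj (hfj.trans (le_of_lt hfρa))
        · intro i j hj hfi hia
          exact Hrow i j hj (hfi.trans (le_of_lt hfρa))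
            (fun h' => absurd (h' ▸ hfi) (not_le_of_gt hfρa))


lemma conj_entry {x : Matrix (Fin n) (Fin n) F} (hba : x b a = 0) (t : F) (i j : Fin n) :
    ((1 + El t a b) * x * (1 + El (-t) a b)) i j
      = x i j + (if i = a then t * x b j else 0) - (if j = b then x i a * t else 0) := by
  rw [mul_one_add_el_apply, one_add_el_mul_apply, one_add_el_mul_apply]
  rw [hba, mul_zero]
  by_cases hj : j = b <;> by_cases hi : i = a <;> simp [hi, hj] <;> ring

/-- the key chain lemma: the row operation `row a += t ⬝ row b` can be realized on
columns `≤ c`. -/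
lemma addrow {c : ℕ} (hJall : True) : ∀ m : ℕ, ∀ (x : Matrix (Fin n) (Fin n) F) (d a b : Fin n),
    (f a : ℕ) ≤ m → LC f c x d a b → x ∈ JSet F f → ∀ t : F,
    ∃ x₂, EquivJ F f x x₂ ∧ x₂ ∈ JSet F f ∧
      ∀ i j : Fin n, (j : ℕ) ≤ c → x₂ i j = x i j + t * (if i = a then x b j else 0) := by
  intro m
  induction m using Nat.strong_induction_on with
  | _ m ih =>
  intro x d a b hm h hJ t
  cases h with
  | done d a b hfab hab hfd hac hbc hrowb hcola =>
      refine ⟨(1 + El t a b) * x * (1 + El (-t) a b), ?_, ?_, ?_⟩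
      · exact equivJ_conj (one_add_el_mem_R hab hfab t) (one_add_el_inv_mul hab t)
      · exact equivJ_J hJ (equivJ_conj (one_add_el_mem_R hab hfab t) (one_add_el_inv_mul hab t))
      · intro i j hj
        rw [conj_entry (hcola b) t i j, hcola i]
        by_cases hi : i = a <;> simp [hi, mul_comm]
  | nop d a b ρa ρb hfab hab hfd hac hbc hrowb hcola hpa hrowρb hq hfρa hfρb hfρ =>
      have had : a ≠ d := fun h' => absurd (h' ▸ hfd) (lt_irrefl _)
      have hba : x b a = 0 := hrowb a hac had
      set x₁ := (1 + El t a b) * x * (1 + El (-t) a b) with hx₁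
      have hequiv1 : EquivJ F f x x₁ :=
        equivJ_conj (one_add_el_mem_R hab hfab t) (one_add_el_inv_mul hab t)
      have hJ1 : x₁ ∈ JSet F f := equivJ_J hJ hequiv1
      have hx₁app : ∀ i j : Fin n, x₁ i j
          = x i j + (if i = a then t * x b j else 0) - (if j = b then x i a * t else 0) :=
        conj_entry hba t
      set t₂ := t * x ρa a / x ρb b with ht₂
      refine ⟨(1 + El t₂ ρa ρb) * x₁, ?_, ?_, ?_⟩
      · refine equivJ_trans hequiv1 ?_
        have := equivJ_aNb (one_add_mem_N (el_mem_J t₂ hfρ)) (one_mem_N (f := f) (F := F)) (x := x₁)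
        simpa using this
      · refine equivJ_J hJ1 ?_
        have := equivJ_aNb (one_add_mem_N (el_mem_J t₂ hfρ)) (one_mem_N (f := f) (F := F)) (x := x₁)
        simpa using this
      · intro i j hj
        rw [one_add_el_mul_apply, hx₁app i j]
        have hρba : ρb ≠ a := by
          intro h'
          rw [h'] at hfρb
          exact absurd (hfab ▸ hfρb) (lt_irrefl _)
        have hx₁ρb : x₁ ρb j = x ρb j := by
          rw [hx₁app ρb j, if_neg hρba, hrowρb a hac hab, add_zero, zero_mul]
          by_cases hjb : j = b <;> simp [hjb]
        rw [hx₁ρb]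
        by_cases hiρ : i = ρa
        · have hρa_ne_a : ρa ≠ a := fun h' => absurd (h' ▸ hfρa) (lt_irrefl _)
          rw [hiρ, if_neg hρa_ne_a, if_neg hρa_ne_a]
          by_cases hjb : j = b
          · rw [hjb, if_pos rfl, if_pos rfl]
            have : t₂ * x ρb b = t * x ρa a := by
              rw [ht₂, div_mul_cancel₀ _ hq]
            rw [this]
            ring
          · rw [if_neg hjb, hrowρb j hj hjb, mul_zero]
            simp
        · rw [if_neg hiρ]
          by_cases hjb : j = b
          · rw [if_pos hjb, hcola i hiρ, zero_mul]
            by_cases hi : i = a <;> simp [hi, mul_comm]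
          · rw [if_neg hjb]
            by_cases hi : i = a <;> simp [hi, mul_comm]
  | step d a b ρa ρb hfab hab hfd hac hbc hrowb hcola hpa hq hfρa hfρb hfρ sub =>
      have had : a ≠ d := fun h' => absurd (h' ▸ hfd) (lt_irrefl _)
      have hba : x b a = 0 := hrowb a hac had
      set x₁ := (1 + El t a b) * x * (1 + El (-t) a b) with hx₁
      have hequiv1 : EquivJ F f x x₁ :=
        equivJ_conj (one_add_el_mem_R hab hfab t) (one_add_el_inv_mul hab t)
      have hJ1 : x₁ ∈ JSet F f := equivJ_J hJ hequiv1
      have hx₁app : ∀ i j : Fin n, x₁ i j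
          = x i j + (if i = a then t * x b j else 0) - (if j = b then x i a * t else 0) :=
        conj_entry hba t
      have hρba : ρb ≠ a := by
        intro h'
        rw [h'] at hfρb
        exact absurd (hfab ▸ hfρb) (lt_irrefl _)
      have hrowρb : ∀ j : Fin n, (j : ℕ) ≤ c → j ≠ b → x ρb j = 0 := sub.hrowb'
      -- transfer the chain to x₁
      have hsub1 : LC f c x₁ b ρa ρb := by
        refine sub.mono ?_ ?_
        · intro i j hj hfj
          rw [hx₁app i j]
          have hjb : j ≠ b := by
            intro h'
            rw [h'] at hfj
            exact absurd (lt_of_lt_of_le (hfab ▸ hfρa) hfj) (lt_irrefl _)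
          have hjd : j ≠ d := by
            intro h'
            rw [h'] at hfj
            exact absurd (lt_of_lt_of_le (hfρa.trans hfd) hfj) (lt_irrefl _)
          rw [hrowb j hj hjd, mul_zero, if_neg hjb]
          simp
        · intro i j hj hfi hiρ
          rw [hx₁app i j]
          have hia : i ≠ a := by
            intro h'
            rw [h'] at hfi
            exact absurd (lt_of_lt_of_le hfρa hfi) (lt_irrefl _)
          rw [if_neg hia, hcola i hiρ, zero_mul]
          simp
      have hfρam : (f ρa : ℕ) < m := lt_of_lt_of_le (Fin.lt_iff_val_lt_val.mp hfρa) hm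
      obtain ⟨x₂, hequiv2, hJ2, hx₂⟩ :=
        ih (f ρa) hfρam x₁ b ρa ρb (le_refl _) hsub1 hJ1 (t * x ρa a / x ρb b)
      refine ⟨x₂, equivJ_trans hequiv1 hequiv2, hJ2, ?_⟩
      intro i j hj
      have hx₁ρb : x₁ ρb j = x ρb j := by
        rw [hx₁app ρb j, if_neg hρba, hrowρb a hac hab, add_zero, zero_mul]
        by_cases hjb : j = b <;> simp [hjb]
      rw [hx₂ i j hj, hx₁ρb, hx₁app i j]
      by_cases hiρ : i = ρa
      · have hρa_ne_a : ρa ≠ a := fun h' => absurd (h' ▸ hfρa) (lt_irrefl _)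
        rw [hiρ, if_neg hρa_ne_a, if_neg hρa_ne_a, if_pos rfl]
        by_cases hjb : j = b
        · rw [hjb, if_pos rfl]
          have : t * x ρa a / x ρb b * x ρb b = t * x ρa a := div_mul_cancel₀ _ hq
          rw [this]
          ring
        · rw [if_neg hjb, hrowρb j hj hjb, mul_zero]
          simp
      · rw [if_neg hiρ]
        by_cases hjb : j = b
        · rw [if_pos hjb, hcola i hiρ, zero_mul]
          by_cases hi : i = a <;> simp [hi, mul_comm]
        · rw [if_neg hjb]
          by_cases hi : i = a <;> simp [hi, mul_comm]


/-- the processed part (columns `< c`) is monomial -/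
def PMono (x : Matrix (Fin n) (Fin n) F) (f : Fin n → Fin s) (c : ℕ) : Prop :=
  (∀ j i i' : Fin n, (j : ℕ) < c → x i j ≠ 0 → x i' j ≠ 0 → i = i') ∧
  (∀ i j j' : Fin n, (j : ℕ) < c → (j' : ℕ) < c → x i j ≠ 0 → x i j' ≠ 0 → j = j')

/-- pivot rows have no entry in column number `c` -/
def Ph1 (x : Matrix (Fin n) (Fin n) F) (c : ℕ) : Prop :=
  ∀ i j j' : Fin n, (j : ℕ) < c → (j' : ℕ) = c → x i j ≠ 0 → x i j' = 0

lemma orient {c : ℕ} (hmono : Monotone f) : ∀ m : ℕ,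
    ∀ (x : Matrix (Fin n) (Fin n) F) (a b da db : Fin n),
    x ∈ JSet F f → PMono x f c → Ph1 x c →
    (f a : ℕ) ≤ m → f a = f b → a ≠ b → (a : ℕ) < c → (b : ℕ) < c →
    f a < f da → f a < f db →
    (∀ j : Fin n, (j : ℕ) ≤ c → j ≠ da → x a j = 0) →
    (∀ j : Fin n, (j : ℕ) ≤ c → j ≠ db → x b j = 0) →
    LC f c x db a b ∨ LC f c x da b a := by
  intro m
  induction m using Nat.strong_induction_on with
  | _ m ih =>
  intro x a b da db hJ hPM hPh hm hfab hab hac hbc hfda hfdb hrowa hrowb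
  by_cases hca : ∀ i, x i a = 0
  · exact Or.inl (LC.done db a b hfab hab hfdb hac.le hbc.le hrowb hca)
  by_cases hcb : ∀ i, x i b = 0
  · exact Or.inr (LC.done da b a hfab.symm hab.symm (hfab ▸ hfda) hbc.le hac.le hrowa hcb)
  push_neg at hca hcb
  obtain ⟨ρa, hρa⟩ := hca
  obtain ⟨ρb, hρb⟩ := hcb
  have hua : ∀ i, i ≠ ρa → x i a = 0 := by
    intro i hi
    by_contra h'
    exact hi (hPM.1 a i ρa hac h' hρa)
  have hub : ∀ i, i ≠ ρb → x i b = 0 := by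
    intro i hi
    by_contra h'
    exact hi (hPM.1 b i ρb hbc h' hρb)
  have hfρa : f ρa < f a := by
    by_contra h'
    exact hρa (hJ ρa a h')
  have hfρb : f ρb < f b := by
    by_contra h'
    exact hρb (hJ ρb b h')
  have hrowρa : ∀ j : Fin n, (j : ℕ) ≤ c → j ≠ a → x ρa j = 0 := by
    intro j hj hja
    rcases lt_or_eq_of_le hj with hlt | heq
    · by_contra h'
      exact hja (hPM.2 ρa j a hlt hac h' hρa)
    · exact hPh ρa a j hac heq hρa
  have hrowρb : ∀ j : Fin n, (j : ℕ) ≤ c → j ≠ b → x ρb j = 0 := by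
    intro j hj hjb
    rcases lt_or_eq_of_le hj with hlt | heq
    · by_contra h'
      exact hjb (hPM.2 ρb j b hlt hbc h' hρb)
    · exact hPh ρb b j hbc heq hρb
  have hρac : (ρa : ℕ) < c := by
    have h1 : (ρa : ℕ) < (a : ℕ) := by
      by_contra h'
      push_neg at h'
      exact absurd (hmono (Fin.le_def.mpr h')) (not_le_of_gt hfρa)
    exact h1.trans hac
  have hρbc : (ρb : ℕ) < c := by
    have h1 : (ρb : ℕ) < (b : ℕ) := by
      by_contra h'
      push_neg at h'
      exact absurd (hmono (Fin.le_def.mpr h')) (not_le_of_gt hfρb)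
    exact h1.trans hbc
  rcases lt_trichotomy (f ρa) (f ρb) with h | h | h
  · exact Or.inl (LC.nop db a b ρa ρb hfab hab hfdb hac.le hbc.le hrowb hua hρa
      hrowρb hρb hfρa hfρb h)
  · -- recurse
    have hρρ : ρa ≠ ρb := by
      intro heq
      apply hab
      exact hPM.2 ρa a b hac hbc hρa (by rw [heq]; exact hρb)
    have hlt : (f ρa : ℕ) < m := lt_of_lt_of_le (Fin.lt_iff_val_lt_val.mp hfρa) hm
    rcases ih (f ρa) hlt x ρa ρb a b hJ hPM hPh (le_refl _) h hρρ hρac hρbc hfρa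
      (h ▸ hfρb) hrowρa hrowρb with sub | sub
    · exact Or.inl (LC.step db a b ρa ρb hfab hab hfdb hac.le hbc.le hrowb hua hρa
        hρb hfρa hfρb h sub)
    · exact Or.inr (LC.step da b a ρb ρa hfab.symm hab.symm (hfab ▸ hfda) hbc.le hac.le hrowa hub hρb
        hρa hfρb hfρa h.symm sub)
  · exact Or.inr (LC.nop da b a ρb ρa hfab.symm hab.symm (hfab ▸ hfda) hbc.le hac.le hrowa hub hρb
      hrowρa hρa hfρb hfρa h)


lemma phase1 {c : ℕ} (hc : c < n) (hmono : Monotone f) : ∀ k : ℕ,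
    ∀ x : Matrix (Fin n) (Fin n) F, x ∈ JSet F f → PMono x f c →
    (Finset.univ.filter (fun v : Fin n =>
      x v ⟨c, hc⟩ ≠ 0 ∧ ∃ j : Fin n, (j : ℕ) < c ∧ x v j ≠ 0)).card ≤ k →
    ∃ x', EquivJ F f x x' ∧ x' ∈ JSet F f ∧ PMono x' f c ∧
      (∀ i, x' i ⟨c, hc⟩ ≠ 0 → ∀ j : Fin n, (j : ℕ) < c → x' i j = 0) := by
  intro k
  induction k with
  | zero =>
      intro x hJ hPM hcard
      refine ⟨x, equivJ_refl x, hJ, hPM, ?_⟩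
      intro i hiC j hj
      by_contra h'
      have : i ∈ Finset.univ.filter (fun v : Fin n =>
          x v ⟨c, hc⟩ ≠ 0 ∧ ∃ j : Fin n, (j : ℕ) < c ∧ x v j ≠ 0) := by
        simp only [Finset.mem_filter, Finset.mem_univ, true_and]
        exact ⟨hiC, j, hj, h'⟩
      have := Finset.card_pos.mpr ⟨i, this⟩
      omega
  | succ k ih =>
      intro x hJ hPM hcard
      set S := Finset.univ.filter (fun v : Fin n =>
        x v ⟨c, hc⟩ ≠ 0 ∧ ∃ j : Fin n, (j : ℕ) < c ∧ x v j ≠ 0) with hS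
      by_cases hemp : S = ∅
      · refine ⟨x, equivJ_refl x, hJ, hPM, ?_⟩
        intro i hiC j hj
        by_contra h'
        have : i ∈ S := by
          rw [hS]
          simp only [Finset.mem_filter, Finset.mem_univ, true_and]
          exact ⟨hiC, j, hj, h'⟩
        rw [hemp] at this
        exact absurd this (Finset.notMem_empty i)
      obtain ⟨v, hv⟩ := Finset.nonempty_iff_ne_empty.mpr hemp
      have hv' := hv
      rw [hS, Finset.mem_filter] at hv'
      obtain ⟨-, hvC, κ, hκlt, hκ⟩ := hv'
      set C : Fin n := ⟨c, hc⟩ with hC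
      have hκC : κ ≠ C := by
        intro h'
        rw [h', hC] at hκlt
        exact absurd hκlt (lt_irrefl _)
      have hu : ∀ i, i ≠ v → x i κ = 0 := by
        intro i hi
        by_contra h'
        exact hi (hPM.1 κ i v hκlt h' hκ)
      have hfκC : f κ ≤ f C := hmono (Fin.le_def.mpr (le_of_lt hκlt))
      -- the modified matrix: in both cases only entry (v, C) changes among columns ≤ c,
      -- and row updates occur only in columns > c.
      have key : ∃ x₁, EquivJ F f x x₁ ∧ x₁ ∈ JSet F f ∧
          (∀ i j : Fin n, (j : ℕ) < c → x₁ i j = x i j) ∧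
          (∀ i, i ≠ v → x₁ i C = x i C) ∧ x₁ v C = 0 := by
        rcases lt_or_eq_of_le hfκC with hlt | heq
        · set t := -(x v C) / (x v κ) with ht
          refine ⟨x * (1 + El t κ C), ?_, ?_, ?_, ?_, ?_⟩
          · have := equivJ_aNb (one_mem_N (f := f) (F := F))
              (one_add_mem_N (el_mem_J t hlt)) (x := x)
            simpa using this
          · apply equivJ_J hJ
            have := equivJ_aNb (one_mem_N (f := f) (F := F))
              (one_add_mem_N (el_mem_J t hlt)) (x := x)
            simpa using this
          · intro i j hj
            rw [mul_one_add_el_apply]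
            have : j ≠ C := by
              intro h'
              rw [h', hC] at hj
              exact absurd hj (lt_irrefl _)
            simp [this]
          · intro i hi
            rw [mul_one_add_el_apply, hu i hi, if_pos rfl, zero_mul, add_zero]
          · rw [mul_one_add_el_apply, if_pos rfl, ht]
            rw [mul_comm, div_mul_cancel₀ _ hκ]
            ring
        · set t := (x v C) / (x v κ) with ht
          have hCκ : x C κ = 0 := by
            apply hJ
            rw [heq]
            exact lt_irrefl _
          have hrowC : ∀ j : Fin n, (j : ℕ) ≤ c → x C j = 0 := by
            intro j hj
            apply hJ
            have : f j ≤ f C := hmono (Fin.le_def.mpr hj)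
            exact not_lt_of_ge this
          refine ⟨(1 + El t κ C) * x * (1 + El (-t) κ C), ?_, ?_, ?_, ?_, ?_⟩
          · exact equivJ_conj (one_add_el_mem_R hκC heq t) (one_add_el_inv_mul hκC t)
          · exact equivJ_J hJ (equivJ_conj (one_add_el_mem_R hκC heq t)
              (one_add_el_inv_mul hκC t))
          · intro i j hj
            rw [conj_entry hCκ t i j]
            have hjC : j ≠ C := by
              intro h'
              rw [h', hC] at hj
              exact absurd hj (lt_irrefl _)
            rw [if_neg hjC, hrowC j (le_of_lt hj), mul_zero]
            simp
          · intro i hi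
            rw [conj_entry hCκ t i C, hrowC C (le_refl _), mul_zero, if_pos rfl,
              hu i hi, zero_mul]
            simp
          · rw [conj_entry hCκ t v C, hrowC C (le_refl _), mul_zero, if_pos rfl, ht]
            rw [mul_comm, div_mul_cancel₀ _ hκ]
            simp
      obtain ⟨x₁, he1, hJ1, hcols, hcolC, hvC1⟩ := key
      have hPM1 : PMono x₁ f c := by
        constructor
        · intro j i i' hj h1 h2
          rw [hcols i j hj] at h1
          rw [hcols i' j hj] at h2
          exact hPM.1 j i i' hj h1 h2
        · intro i j j' hj hj' h1 h2
          rw [hcols i j hj] at h1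
          rw [hcols i j' hj'] at h2
          exact hPM.2 i j j' hj hj' h1 h2
      have hsub : (Finset.univ.filter (fun v' : Fin n =>
          x₁ v' ⟨c, hc⟩ ≠ 0 ∧ ∃ j : Fin n, (j : ℕ) < c ∧ x₁ v' j ≠ 0)) ⊆ S.erase v := by
        intro i hi
        rw [Finset.mem_filter] at hi
        obtain ⟨-, hiC, j, hj, hij⟩ := hi
        have hiv : i ≠ v := by
          intro h'
          rw [h'] at hiC
          exact hiC hvC1
        rw [Finset.mem_erase]
        refine ⟨hiv, ?_⟩
        rw [hS, Finset.mem_filter]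
        refine ⟨Finset.mem_univ i, ?_, j, hj, ?_⟩
        · rw [← hcolC i hiv]
          exact hiC
        · rw [← hcols i j hj]
          exact hij
      have hcard1 : (Finset.univ.filter (fun v' : Fin n =>
          x₁ v' ⟨c, hc⟩ ≠ 0 ∧ ∃ j : Fin n, (j : ℕ) < c ∧ x₁ v' j ≠ 0)).card ≤ k := by
        calc _ ≤ (S.erase v).card := Finset.card_le_card hsub
          _ = S.card - 1 := Finset.card_erase_of_mem hv
          _ ≤ k := by omega
      obtain ⟨x', he', hJ', hPM', hlast⟩ := ih x₁ hJ1 hPM1 hcard1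
      exact ⟨x', equivJ_trans he1 he', hJ', hPM', hlast⟩


lemma phase2 {c : ℕ} (hc : c < n) (hmono : Monotone f) : ∀ k : ℕ,
    ∀ x : Matrix (Fin n) (Fin n) F, x ∈ JSet F f → PMono x f c →
    (∀ i, x i ⟨c, hc⟩ ≠ 0 → ∀ j : Fin n, (j : ℕ) < c → x i j = 0) →
    (Finset.univ.filter (fun v : Fin n => x v ⟨c, hc⟩ ≠ 0)).card ≤ k →
    ∃ x', EquivJ F f x x' ∧ x' ∈ JSet F f ∧ PMono x' f (c + 1) := by
  intro k
  induction k with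
  | zero =>
      intro x hJ hPM hP hcard
      refine ⟨x, equivJ_refl x, hJ, ?_, ?_⟩
      · intro j i i' hj h1 h2
        rcases Nat.lt_succ_iff_lt_or_eq.mp hj with hlt | heqc
        · exact hPM.1 j i i' hlt h1 h2
        · exfalso
          have : i ∈ Finset.univ.filter (fun v : Fin n => x v ⟨c, hc⟩ ≠ 0) := by
            simp only [Finset.mem_filter, Finset.mem_univ, true_and]
            have : j = (⟨c, hc⟩ : Fin n) := Fin.ext heqc
            rw [← this]; exact h1
          have := Finset.card_pos.mpr ⟨i, this⟩
          omega
      · intro i j j' hj hj' h1 h2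
        rcases Nat.lt_succ_iff_lt_or_eq.mp hj with hlt | heqc
        · rcases Nat.lt_succ_iff_lt_or_eq.mp hj' with hlt' | heqc'
          · exact hPM.2 i j j' hlt hlt' h1 h2
          · exfalso
            have hj'C : j' = (⟨c, hc⟩ : Fin n) := Fin.ext heqc'
            rw [hj'C] at h2
            exact h1 (hP i h2 j hlt)
        · rcases Nat.lt_succ_iff_lt_or_eq.mp hj' with hlt' | heqc'
          · exfalso
            have hjC : j = (⟨c, hc⟩ : Fin n) := Fin.ext heqc
            rw [hjC] at h1
            exact h2 (hP i h1 j' hlt')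
          · exact Fin.ext (heqc.trans heqc'.symm)
  | succ k ih =>
      intro x hJ hPM hP hcard
      set C : Fin n := ⟨c, hc⟩ with hC
      by_cases h1 : (Finset.univ.filter (fun v : Fin n => x v C ≠ 0)).card ≤ 1
      · -- conclude directly (same as base case)
        refine ⟨x, equivJ_refl x, hJ, ?_, ?_⟩
        · intro j i i' hj hx1 hx2
          rcases Nat.lt_succ_iff_lt_or_eq.mp hj with hlt | heqc
          · exact hPM.1 j i i' hlt hx1 hx2
          · have hjC : j = C := Fin.ext heqc
            rw [hjC] at hx1 hx2
            refine Finset.card_le_one.mp h1 i ?_ i' ?_ <;>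
              simp only [Finset.mem_filter, Finset.mem_univ, true_and]
            · exact hx1
            · exact hx2
        · intro i j j' hj hj' hx1 hx2
          rcases Nat.lt_succ_iff_lt_or_eq.mp hj with hlt | heqc
          · rcases Nat.lt_succ_iff_lt_or_eq.mp hj' with hlt' | heqc'
            · exact hPM.2 i j j' hlt hlt' hx1 hx2
            · exfalso
              have hj'C : j' = C := Fin.ext heqc'
              rw [hj'C] at hx2
              exact hx1 (hP i hx2 j hlt)
          · rcases Nat.lt_succ_iff_lt_or_eq.mp hj' with hlt' | heqc'
            · exfalso
              have hjC : j = C := Fin.ext heqc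
              rw [hjC] at hx1
              exact hx2 (hP i hx1 j' hlt')
            · exact Fin.ext (heqc.trans heqc'.symm)
      · push_neg at h1
        obtain ⟨v, hvmem, w, hwmem, hvw⟩ := Finset.one_lt_card.mp h1
        rw [Finset.mem_filter] at hvmem hwmem
        have hvC : x v C ≠ 0 := hvmem.2
        have hwC : x w C ≠ 0 := hwmem.2
        have hfvC : f v < f C := by
          by_contra h'
          exact hvC (hJ v C h')
        have hfwC : f w < f C := by
          by_contra h'
          exact hwC (hJ w C h')
        -- generic finishing move given a matrix with (u, C) killed and columns ≤ c otherwise unchanged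
        have finish : ∀ (x₁ : Matrix (Fin n) (Fin n) F) (u : Fin n), x u C ≠ 0 →
            EquivJ F f x x₁ → x₁ ∈ JSet F f →
            (∀ i j : Fin n, (j : ℕ) < c → x₁ i j = x i j) →
            (∀ i, i ≠ u → x₁ i C = x i C) → x₁ u C = 0 →
            ∃ x', EquivJ F f x x' ∧ x' ∈ JSet F f ∧ PMono x' f (c + 1) := by
          intro x₁ u huC he1 hJ1 hcols hcolC huC1
          have hPM1 : PMono x₁ f c := by
            constructor
            · intro j i i' hj hx1 hx2
              rw [hcols i j hj] at hx1
              rw [hcols i' j hj] at hx2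
              exact hPM.1 j i i' hj hx1 hx2
            · intro i j j' hj hj' hx1 hx2
              rw [hcols i j hj] at hx1
              rw [hcols i j' hj'] at hx2
              exact hPM.2 i j j' hj hj' hx1 hx2
          have hP1 : ∀ i, x₁ i C ≠ 0 → ∀ j : Fin n, (j : ℕ) < c → x₁ i j = 0 := by
            intro i hiC j hj
            have hiu : i ≠ u := by
              intro h'
              rw [h'] at hiC
              exact hiC huC1
            rw [hcols i j hj]
            exact hP i (by rw [← hcolC i hiu]; exact hiC) j hj
          have hsub : (Finset.univ.filter (fun v' : Fin n => x₁ v' C ≠ 0)) ⊆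
              (Finset.univ.filter (fun v' : Fin n => x v' C ≠ 0)).erase u := by
            intro i hi
            rw [Finset.mem_filter] at hi
            have hiu : i ≠ u := by
              intro h'
              rw [h'] at hi
              exact hi.2 huC1
            rw [Finset.mem_erase, Finset.mem_filter]
            exact ⟨hiu, Finset.mem_univ i, by rw [← hcolC i hiu]; exact hi.2⟩
          have humem : u ∈ Finset.univ.filter (fun v' : Fin n => x v' C ≠ 0) := by
            simp only [Finset.mem_filter, Finset.mem_univ, true_and]
            exact huC
          have hcard1 : (Finset.univ.filter (fun v' : Fin n => x₁ v' C ≠ 0)).card ≤ k := by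
            calc _ ≤ _ := Finset.card_le_card hsub
              _ = _ - 1 := Finset.card_erase_of_mem humem
              _ ≤ k := by omega
          obtain ⟨x', he', hJ', hPM'⟩ := ih x₁ hJ1 hPM1 hP1 hcard1
          exact ⟨x', equivJ_trans he1 he', hJ', hPM'⟩
        -- a left N-kill: kill (u, C) using row u' where f u < f u'
        have nkill : ∀ (u u' : Fin n), x u C ≠ 0 → x u' C ≠ 0 → f u < f u' →
            ∃ x', EquivJ F f x x' ∧ x' ∈ JSet F f ∧ PMono x' f (c + 1) := by
          intro u u' huC hu'C hflt
          set t := -(x u C) / (x u' C) with htdef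
          refine finish ((1 + El t u u') * x) u huC ?_ ?_ ?_ ?_ ?_
          · have := equivJ_aNb (one_add_mem_N (el_mem_J t hflt))
              (one_mem_N (f := f) (F := F)) (x := x)
            simpa using this
          · apply equivJ_J hJ
            have := equivJ_aNb (one_add_mem_N (el_mem_J t hflt))
              (one_mem_N (f := f) (F := F)) (x := x)
            simpa using this
          · intro i j hj
            rw [one_add_el_mul_apply]
            by_cases hi : i = u
            · rw [if_pos hi, hP u' hu'C j hj, mul_zero, add_zero]
            · rw [if_neg hi, add_zero]
          · intro i hi
            rw [one_add_el_mul_apply, if_neg hi, add_zero]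
          · rw [one_add_el_mul_apply, if_pos rfl, htdef, div_mul_cancel₀ _ hu'C]
            ring
        rcases lt_trichotomy (f v) (f w) with hflt | hfeq | hfgt
        · exact nkill v w hvC hwC hflt
        · -- same block: use the chain machinery
          have hPh : Ph1 x c := by
            intro i j j' hj hj' hx1
            have hj'C : j' = C := Fin.ext hj'
            rw [hj'C]
            by_contra h'
            exact hx1 (hP i h' j hj)
          have hvc : (v : ℕ) < c := by
            have : (v : ℕ) < (C : ℕ) := by
              by_contra h'
              push_neg at h'
              exact absurd (hmono (Fin.le_def.mpr h')) (not_le_of_gt hfvC)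
            exact this
          have hwc : (w : ℕ) < c := by
            have : (w : ℕ) < (C : ℕ) := by
              by_contra h'
              push_neg at h'
              exact absurd (hmono (Fin.le_def.mpr h')) (not_le_of_gt hfwC)
            exact this
          have hrowv : ∀ j : Fin n, (j : ℕ) ≤ c → j ≠ C → x v j = 0 := by
            intro j hj hjC
            have : (j : ℕ) < c := by
              rcases lt_or_eq_of_le hj with h' | h'
              · exact h'
              · exact absurd (Fin.ext h') hjC
            exact hP v hvC j this
          have hroww : ∀ j : Fin n, (j : ℕ) ≤ c → j ≠ C → x w j = 0 := by
            intro j hj hjC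
            have : (j : ℕ) < c := by
              rcases lt_or_eq_of_le hj with h' | h'
              · exact h'
              · exact absurd (Fin.ext h') hjC
            exact hP w hwC j this
          rcases orient hmono (f v) x v w C C hJ hPM hPh (le_refl _) hfeq hvw hvc hwc
            hfvC hfvC hrowv hroww with hl | hl
          · obtain ⟨x₂, he2, hJ2, hx2⟩ := addrow trivial (f v) x C v w (le_refl _) hl hJ
              (-(x v C) / (x w C))
            refine finish x₂ v hvC he2 hJ2 ?_ ?_ ?_
            · intro i j hj
              rw [hx2 i j (le_of_lt hj)]
              by_cases hi : i = v
              · rw [if_pos hi, hP w hwC j hj, mul_zero, add_zero]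
              · rw [if_neg hi, mul_zero, add_zero]
            · intro i hi
              rw [hx2 i C (le_refl _), if_neg hi, mul_zero, add_zero]
            · rw [hx2 v C (le_refl _), if_pos rfl, div_mul_cancel₀ _ hwC]
              ring
          · obtain ⟨x₂, he2, hJ2, hx2⟩ := addrow trivial (f w) x C w v (le_refl _) hl hJ
              (-(x w C) / (x v C))
            refine finish x₂ w hwC he2 hJ2 ?_ ?_ ?_
            · intro i j hj
              rw [hx2 i j (le_of_lt hj)]
              by_cases hi : i = w
              · rw [if_pos hi, hP v hvC j hj, mul_zero, add_zero]
              · rw [if_neg hi, mul_zero, add_zero]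
            · intro i hi
              rw [hx2 i C (le_refl _), if_neg hi, mul_zero, add_zero]
            · rw [hx2 w C (le_refl _), if_pos rfl, div_mul_cancel₀ _ hvC]
              ring
        · exact nkill w v hwC hvC hfgt


lemma core (hmono : Monotone f) (x : Matrix (Fin n) (Fin n) F) (hJ : x ∈ JSet F f) :
    ∀ c : ℕ, c ≤ n →
    ∃ x', EquivJ F f x x' ∧ x' ∈ JSet F f ∧ PMono x' f c := by
  intro c
  induction c with
  | zero =>
      intro _
      refine ⟨x, equivJ_refl x, hJ, ?_, ?_⟩
      · intro j i i' hj
        exact absurd hj (Nat.not_lt_zero _)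
      · intro i j j' hj
        exact absurd hj (Nat.not_lt_zero _)
  | succ c ihc =>
      intro hcn
      have hc : c < n := Nat.lt_of_succ_le hcn
      obtain ⟨x₁, he1, hJ1, hPM1⟩ := ihc (Nat.le_of_succ_le hcn)
      obtain ⟨x₂, he2, hJ2, hPM2, hP2⟩ := phase1 hc hmono
        (Finset.univ.filter (fun v : Fin n =>
          x₁ v ⟨c, hc⟩ ≠ 0 ∧ ∃ j : Fin n, (j : ℕ) < c ∧ x₁ v j ≠ 0)).card x₁ hJ1 hPM1 (le_refl _)
      obtain ⟨x₃, he3, hJ3, hPM3⟩ := phase2 hc hmono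
        (Finset.univ.filter (fun v : Fin n => x₂ v ⟨c, hc⟩ ≠ 0)).card x₂ hJ2 hPM2 hP2 (le_refl _)
      exact ⟨x₃, equivJ_trans he1 (equivJ_trans he2 he3), hJ3, hPM3⟩

/-- every element of `J` is equivalent to a monomial matrix -/
lemma to_monomial (hmono : Monotone f) (x : Matrix (Fin n) (Fin n) F) (hJ : x ∈ JSet F f) :
    ∃ x', EquivJ F f x x' ∧ x' ∈ JSet F f ∧
      (∀ j i i' : Fin n, x' i j ≠ 0 → x' i' j ≠ 0 → i = i') ∧
      (∀ i j j' : Fin n, x' i j ≠ 0 → x' i j' ≠ 0 → j = j') := by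
  obtain ⟨x', he, hJ', hPM⟩ := core hmono x hJ n (le_refl n)
  refine ⟨x', he, hJ', ?_, ?_⟩
  · intro j i i' h1 h2
    exact hPM.1 j i i' j.isLt h1 h2
  · intro i j j' h1 h2
    exact hPM.2 i j j' j.isLt j'.isLt h1 h2

lemma unit_of_card_one {F : Type} [Field F] : ∀ (k : ℕ), k = 1 →
    ∀ (M : Matrix (Fin k) (Fin k) F) (u : F), (∀ a b, M a b = u) → u ≠ 0 → IsUnit M := by
  intro k hk
  subst hk
  intro M u hM hu
  rw [Matrix.isUnit_iff_isUnit_det, Matrix.det_fin_one, hM 0 0]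
  exact isUnit_iff_ne_zero.mpr hu

end Stmt8Aux

/-- in the parabolic `P = RN ≤ GL(n, F_q)` of type `(n₁,…,n_s)`, every
`x ∈ J` is equivalent to an element associated with a block-rook placement: a matrix
supported on a union of non-attacking block-rooks `A_t × B_t` (each contained in a single
block `I_k × I_ℓ`, `k < ℓ`, with `|A_t| = |B_t|`) whose submatrix on each block-rook is
invertible. -/
theorem stmt8 {n s : ℕ} (f : Fin n → Fin s)
    (hmono : Monotone f) (hsurj : Function.Surjective f) :
    ∀ x ∈ JSet F f,
      ∃ (m : ℕ) (A B : Fin m → Finset (Fin n)) (hc : ∀ t, (B t).card = (A t).card),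
        -- each block-rook lies in a single block `I_k × I_ℓ` with `k < ℓ`
        (∀ t, ∃ k l : Fin s, k < l ∧ (∀ i ∈ A t, f i = k) ∧ (∀ j ∈ B t, f j = l)) ∧
        -- the block-rooks do not attack each other
        (∀ t t', t ≠ t' → Disjoint (A t) (A t')) ∧
        (∀ t t', t ≠ t' → Disjoint (B t) (B t')) ∧
        ∃ x' : Matrix (Fin n) (Fin n) F,
          -- `x'` is supported on the union of the block-rooks
          (∀ i j, x' i j ≠ 0 → ∃ t, i ∈ A t ∧ j ∈ B t) ∧
          -- each block-rook submatrix of `x'` is invertible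
          (∀ t, IsUnit (Matrix.of fun (a b : Fin (A t).card) =>
            x' (((A t).orderIsoOfFin rfl a : Fin n)) (((B t).orderIsoOfFin (hc t) b : Fin n)))) ∧
          EquivJ F f x x' := by
  intro x hx
  classical
  obtain ⟨x', he, hJ', hcolclean, hrowclean⟩ := Stmt8Aux.to_monomial hmono x hx
  set Sup : Finset (Fin n × Fin n) :=
    Finset.univ.filter (fun p : Fin n × Fin n => x' p.1 p.2 ≠ 0) with hSup
  set m := Sup.card with hm
  set e : Fin m → (Fin n × Fin n) := fun t => ((Sup.equivFin.symm t : Sup) : Fin n × Fin n)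
    with hedef
  have hmem : ∀ t, e t ∈ Sup := fun t => (Sup.equivFin.symm t).2
  have hne : ∀ t, x' (e t).1 (e t).2 ≠ 0 := by
    intro t
    have := hmem t
    rw [hSup, Finset.mem_filter] at this
    exact this.2
  have hinj : Function.Injective e := by
    intro t t' h
    have : (Sup.equivFin.symm t : Sup) = (Sup.equivFin.symm t' : Sup) := Subtype.ext h
    exact Sup.equivFin.symm.injective this
  refine ⟨m, fun t => {(e t).1}, fun t => {(e t).2}, fun t => by simp, ?_, ?_, ?_, x', ?_, ?_, he⟩
  · intro t
    refine ⟨f (e t).1, f (e t).2, ?_, ?_, ?_⟩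
    · by_contra h'
      exact hne t (hJ' (e t).1 (e t).2 h')
    · intro i hi
      rw [Finset.mem_singleton] at hi
      rw [hi]
    · intro j hj
      rw [Finset.mem_singleton] at hj
      rw [hj]
  · intro t t' htt
    rw [Finset.disjoint_singleton]
    intro h'
    apply htt
    apply hinj
    have h2 : (e t).2 = (e t').2 := by
      apply hrowclean (e t).1 (e t).2 (e t').2 (hne t)
      rw [h']
      exact hne t'
    exact Prod.ext h' h2
  · intro t t' htt
    rw [Finset.disjoint_singleton]
    intro h'
    apply htt
    apply hinj
    have h2 : (e t).1 = (e t').1 := by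
      apply hcolclean (e t).2 (e t).1 (e t').1 (hne t)
      rw [h']
      exact hne t'
    exact Prod.ext h2 h'
  · intro i j hij
    have hmem' : (i, j) ∈ Sup := by
      rw [hSup, Finset.mem_filter]
      exact ⟨Finset.mem_univ _, hij⟩
    refine ⟨Sup.equivFin ⟨(i, j), hmem'⟩, ?_, ?_⟩
    · rw [Finset.mem_singleton, hedef]
      simp
    · rw [Finset.mem_singleton, hedef]
      simp
  · intro t
    apply Stmt8Aux.unit_of_card_one ({(e t).1} : Finset (Fin n)).card (Finset.card_singleton _)
      _ (x' (e t).1 (e t).2) _ (hne t)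
    intro a b
    have ha : (({(e t).1} : Finset (Fin n)).orderIsoOfFin rfl a : Fin n) = (e t).1 := by
      have := (({(e t).1} : Finset (Fin n)).orderIsoOfFin rfl a).2
      rwa [Finset.mem_singleton] at this
    have hb : (({(e t).2} : Finset (Fin n)).orderIsoOfFin (by simp) b : Fin n) = (e t).2 := by
      have := (({(e t).2} : Finset (Fin n)).orderIsoOfFin (by simp) b).2
      rwa [Finset.mem_singleton] at this
    rw [Matrix.of_apply, ha, hb]
end
end

section
/- Let P = RN be a parabolic subgroup of GL(n,F_q), 𝔻 a block-rook placement with associated λ_𝔻 ∈ J*, and J_{𝔻,rt} = {x ∈ J : λ_𝔻(xJ) = 0}. Say a root α = (i,j) ∈ Δ_J is subordinated to 𝔻 if there is a root (i,k) ∈ 𝔻 with the block-column of (i,j) preceding that of (i,k). Then J_{𝔻,rt} is spanned by the matrix units E_α with α ∈ Δ_J not subordinated to 𝔻. -/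
open scoped BigOperators

noncomputable section

variable (F : Type) [Field F] [Fintype F] [DecidableEq F]

/-- The linear form on matrices with coefficient matrix `Λ`:
`λ(x) = ∑_{i,j} Λ_{ij} x_{ij}`. -/
def lamOf {n : ℕ} (Λ x : Matrix (Fin n) (Fin n) F) : F :=
  ∑ i, ∑ j, Λ i j * x i j

set_option linter.unusedSectionVars false

lemma span_stdBasis_eq {n : ℕ} (P Q : Fin n → Fin n → Prop) :
    (Submodule.span F {E : Matrix (Fin n) (Fin n) F | ∃ i j : Fin n,
        P i j ∧ Q i j ∧ E = Matrix.single i j 1} : Set (Matrix (Fin n) (Fin n) F)) =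
      {x | ∀ i j, ¬ (P i j ∧ Q i j) → x i j = 0} := by
  ext x
  simp only [SetLike.mem_coe, Set.mem_setOf_eq]
  constructor
  · intro hx
    induction hx using Submodule.span_induction with
    | mem E hE =>
      obtain ⟨i, j, hP, hQ, rfl⟩ := hE
      intro i' j' h
      have hne : (i', j') ≠ (i, j) := by rintro ⟨⟩; exact h ⟨hP, hQ⟩
      rw [Matrix.single]
      simp only [Matrix.of_apply]
      rw [if_neg]
      intro ⟨h1, h2⟩
      exact hne (by simp [h1, h2])
    | zero => intro i j _; simp
    | add a b _ _ ha hb => intro i j h; simp [ha i j h, hb i j h]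
    | smul c a _ ha => intro i j h; simp [ha i j h]
  · intro hx
    rw [Matrix.matrix_eq_sum_single x]
    refine Submodule.sum_mem _ fun i _ => Submodule.sum_mem _ fun j _ => ?_
    by_cases hP : P i j ∧ Q i j
    · have : Matrix.single i j (x i j) = x i j • Matrix.single i j 1 := by
        rw [Matrix.smul_single]; simp
      rw [this]
      exact Submodule.smul_mem _ _ (Submodule.subset_span ⟨i, j, hP.1, hP.2, rfl⟩)
    · rw [hx i j hP]
      simp [Submodule.zero_mem]

-- (*) key: λ(x * E_{pj}) = ∑ i, Λ i j * x i p
lemma lam_mul_std {n : ℕ} (Λ x : Matrix (Fin n) (Fin n) F) (p j : Fin n) :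
    lamOf F Λ (x * Matrix.single p j 1) = ∑ i, Λ i j * x i p := by
  unfold lamOf
  have h1 : ∀ i j', (x * Matrix.single p j (1:F)) i j'
      = if j' = j then x i p else 0 := by
    intro i j'
    rw [Matrix.mul_apply]
    simp only [Matrix.single, Matrix.of_apply, mul_ite, mul_one, mul_zero]
    by_cases h : j' = j
    · subst h
      simp
    · simp [Ne.symm h, h]
  simp only [h1, mul_ite, mul_zero]
  rw [Finset.sum_comm]
  simp

/-- for `λ_𝔻` associated with a block-rook placement `𝔻` (given by
non-attacking block-rooks `A_t × B_t` with invertible coefficient submatrices),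
`J_{𝔻,rt} = {x ∈ J : λ_𝔻(xJ) = 0}` is spanned by the matrix units `E_α` for the roots
`α ∈ Δ_J` not subordinated to `𝔻`. -/
theorem stmt11 {n s : ℕ} (f : Fin n → Fin s)
    (hmono : Monotone f) (hsurj : Function.Surjective f)
    (m : ℕ) (A B : Fin m → Finset (Fin n)) (hc : ∀ t, (B t).card = (A t).card)
    (hblocks : ∀ t, ∃ k l : Fin s, k < l ∧ (∀ i ∈ A t, f i = k) ∧ (∀ j ∈ B t, f j = l))
    (hdisjA : ∀ t t', t ≠ t' → Disjoint (A t) (A t'))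
    (hdisjB : ∀ t t', t ≠ t' → Disjoint (B t) (B t'))
    (Λ : Matrix (Fin n) (Fin n) F)
    (hsupp : ∀ i j, Λ i j ≠ 0 → ∃ t, i ∈ A t ∧ j ∈ B t)
    (hinv : ∀ t, IsUnit (Matrix.of fun (a b : Fin (A t).card) =>
      Λ (((A t).orderIsoOfFin rfl a : Fin n)) (((B t).orderIsoOfFin (hc t) b : Fin n)))) :
    {x | x ∈ JSet F f ∧ ∀ y ∈ JSet F f, lamOf F Λ (x * y) = 0} =
      (Submodule.span F {E : Matrix (Fin n) (Fin n) F | ∃ i j : Fin n,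
        f i < f j ∧
        -- `(i,j)` is not subordinated to `𝔻`
        ¬ (∃ t, i ∈ A t ∧ ∃ k ∈ B t, f j < f k) ∧
        E = Matrix.single i j 1} : Set (Matrix (Fin n) (Fin n) F)) := by
  rw [span_stdBasis_eq F (fun i j => f i < f j)
      (fun i j => ¬ ∃ t, i ∈ A t ∧ ∃ k ∈ B t, f j < f k)]
  ext x
  simp only [Set.mem_setOf_eq]
  constructor
  · rintro ⟨hxJ, hlam⟩ i p hniS
    by_cases hfp : f i < f p
    · have hsub : ∃ t, i ∈ A t ∧ ∃ k ∈ B t, f p < f k := by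
        by_contra hns; exact hniS ⟨hfp, hns⟩
      obtain ⟨t, hiA, k, hkB, hpk⟩ := hsub
      obtain ⟨k0, l0, hkl, hA0, hB0⟩ := hblocks t
      have star : ∀ j, f p < f j → ∑ i', Λ i' j * x i' p = 0 := by
        intro j hj
        have hyJ : Matrix.single p j (1:F) ∈ JSet F f := by
          intro i' j' h
          rw [Matrix.single]
          simp only [Matrix.of_apply]
          rw [if_neg]
          rintro ⟨rfl, rfl⟩
          exact h hj
        have h2 := hlam _ hyJ
        rwa [lam_mul_std] at h2
      have star' : ∀ j ∈ B t, ∑ i' ∈ A t, Λ i' j * x i' p = 0 := by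
        intro j hjB
        have hfj : f p < f j := by
          rw [hB0 j hjB]
          rw [hB0 k hkB] at hpk
          exact hpk
        rw [← star j hfj]
        apply Finset.sum_subset (Finset.subset_univ _)
        intro i' _ hi'
        by_cases hΛ : Λ i' j = 0
        · rw [hΛ, zero_mul]
        · obtain ⟨t', hiA', hjB'⟩ := hsupp i' j hΛ
          have ht : t' = t := by
            by_contra hne
            exact Finset.disjoint_left.mp (hdisjB t' t hne) hjB' hjB
          exact absurd (ht ▸ hiA') hi'
      set ι := (A t).orderIsoOfFin rfl with hι
      set κ := (B t).orderIsoOfFin (hc t) with hκ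
      set M : Matrix (Fin (A t).card) (Fin (A t).card) F :=
        Matrix.of fun a b => Λ (ι a : Fin n) (κ b : Fin n) with hM
      set v : Fin (A t).card → F := fun a => x (ι a : Fin n) p with hv
      have hvM : Matrix.vecMul v M = 0 := by
        funext b
        have h3 := star' (κ b : Fin n) (κ b).2
        simp only [Matrix.vecMul, dotProduct, Pi.zero_apply]
        rw [← h3]
        have e1 : ∀ a, v a * M a b = Λ (ι a : Fin n) (κ b : Fin n) * x (ι a : Fin n) p :=
          fun a => mul_comm _ _
        rw [Finset.sum_congr rfl (fun a _ => e1 a),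
          ← Finset.sum_coe_sort (A t) (fun i' => Λ i' (κ b : Fin n) * x i' p)]
        exact Equiv.sum_comp ι.toEquiv (fun z : (A t) => Λ (z : Fin n) (κ b : Fin n) * x (z : Fin n) p)
      have hMunit : IsUnit M := hinv t
      have hdet : IsUnit M.det := (Matrix.isUnit_iff_isUnit_det M).mp hMunit
      have hv0 : v = 0 := by
        have h4 := congrArg (fun w => Matrix.vecMul w M⁻¹) hvM
        simpa [Matrix.vecMul_vecMul, Matrix.mul_nonsing_inv M hdet] using h4
      have h5 := congrFun hv0 (ι.symm ⟨i, hiA⟩)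
      simp only [hv, OrderIso.apply_symm_apply, Pi.zero_apply] at h5
      exact h5
    · exact hxJ i p hfp
  · intro hx
    refine ⟨?_, ?_⟩
    · intro i j h
      exact hx i j (fun hS => h hS.1)
    · intro y hy
      unfold lamOf
      refine Finset.sum_eq_zero fun i _ => Finset.sum_eq_zero fun j _ => ?_
      by_cases hΛ : Λ i j = 0
      · rw [hΛ, zero_mul]
      · obtain ⟨t, hiA, hjB⟩ := hsupp i j hΛ
        rw [Matrix.mul_apply, Finset.sum_eq_zero, mul_zero]
        intro p _
        by_cases hpj : f p < f j
        · have hz : x i p = 0 := hx i p (fun hS => hS.2 ⟨t, hiA, j, hjB, hpj⟩)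
          rw [hz, zero_mul]
        · rw [hy p j hpj, mul_zero]
end
end

section
/- Let S = {g₀ ∈ P : Ad_{g₀}(J_{𝔻,rt}) = J_{𝔻,rt} and λ_𝔻(Ad_{g₀}(x)) = λ_𝔻(x) for all x ∈ J_{𝔻,rt}}. If g₀ = bt ∈ S with b ∈ N, t ∈ R, and r ∈ R°_𝔻 (the joint left-right R-stabilizer of λ_𝔻), then trt⁻¹ ∈ R°_𝔻, and the formula g₀ · r = trt⁻¹ defines an action of S on R°_𝔻. -/
open scoped BigOperators

noncomputable section

variable (F : Type) [Field F] [Fintype F] [DecidableEq F]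

def ParSet {n s : ℕ} (f : Fin n → Fin s) : Set (Matrix (Fin n) (Fin n) F) :=
  {g | IsUnit g ∧ ∀ i j, f j < f i → g i j = 0}

/-- `J_{𝔻,rt} = {x ∈ J : λ_𝔻(xJ) = 0}`. -/
def Jrt {n s : ℕ} (f : Fin n → Fin s) (Λ : Matrix (Fin n) (Fin n) F) :
    Set (Matrix (Fin n) (Fin n) F) :=
  {x | x ∈ JSet F f ∧ ∀ y ∈ JSet F f, lamOf F Λ (x * y) = 0}

/-- `R°_𝔻`: the joint left-right stabilizer of `λ_𝔻` in `R`. -/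
def RcircSet {n s : ℕ} (f : Fin n → Fin s) (Λ : Matrix (Fin n) (Fin n) F) :
    Set (Matrix (Fin n) (Fin n) F) :=
  {r | r ∈ RSet F f ∧ ∀ x ∈ JSet F f,
    lamOf F Λ (r * x) = lamOf F Λ x ∧ lamOf F Λ (x * r) = lamOf F Λ x}

/-- The subgroup `S`: elements of `P` whose adjoint action preserves `J_{𝔻,rt}` and the
restriction of `λ_𝔻` to it. -/
def StabSet {n s : ℕ} (f : Fin n → Fin s) (Λ : Matrix (Fin n) (Fin n) F) :
    Set (Matrix (Fin n) (Fin n) F) :=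
  {g | g ∈ ParSet F f ∧ (∀ x, x ∈ Jrt F f Λ ↔ g * x * g⁻¹ ∈ Jrt F f Λ) ∧
    ∀ x ∈ Jrt F f Λ, lamOf F Λ (g * x * g⁻¹) = lamOf F Λ x}

namespace Stmt13Aux

variable {F : Type} [Field F] [Fintype F] [DecidableEq F]
variable {n s : ℕ}

/-- matrices vanishing on a set of positions, as a submodule -/
def zeroSub (Q : Fin n → Fin n → Prop) : Submodule F (Matrix (Fin n) (Fin n) F) where
  carrier := {x | ∀ i j, Q i j → x i j = 0}
  add_mem' := by
    intro a b ha hb i j h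
    simp only [Matrix.add_apply, ha i j h, hb i j h, add_zero]
  zero_mem' := by intro i j _; simp
  smul_mem' := by
    intro c a ha i j h
    simp only [Matrix.smul_apply, ha i j h, smul_zero]

lemma inv_mem_of_mul_closed (U : Submodule F (Matrix (Fin n) (Fin n) F))
    (g : Matrix (Fin n) (Fin n) F) (hg : IsUnit g) (h1 : (1 : Matrix (Fin n) (Fin n) F) ∈ U)
    (hcl : ∀ x ∈ U, g * x ∈ U) : g⁻¹ ∈ U := by
  have hd : IsUnit g.det := (Matrix.isUnit_iff_isUnit_det g).mp hg
  have hgi : g⁻¹ * g = 1 := Matrix.nonsing_inv_mul g hd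
  let L : U →ₗ[F] U :=
    { toFun := fun x => ⟨g * x.1, hcl x.1 x.2⟩
      map_add' := by intro x y; ext : 1; simp [Matrix.mul_add]
      map_smul' := by intro c x; ext : 1; simp [Matrix.mul_smul] }
  have hinj : Function.Injective L := by
    intro x y hxy
    have h2 : g * x.1 = g * y.1 := congrArg Subtype.val hxy
    have h3 : g⁻¹ * (g * x.1) = g⁻¹ * (g * y.1) := by rw [h2]
    rw [← Matrix.mul_assoc, ← Matrix.mul_assoc, hgi, Matrix.one_mul, Matrix.one_mul] at h3
    exact Subtype.ext h3
  have hsurj : Function.Surjective L := (LinearMap.injective_iff_surjective).mp hinj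
  obtain ⟨x, hx⟩ := hsurj ⟨1, h1⟩
  have hx1 : g * x.1 = 1 := congrArg Subtype.val hx
  have hfin : x.1 = g⁻¹ := by
    calc x.1 = (g⁻¹ * g) * x.1 := by rw [hgi, Matrix.one_mul]
    _ = g⁻¹ * (g * x.1) := by rw [Matrix.mul_assoc]
    _ = g⁻¹ := by rw [hx1, Matrix.mul_one]
  exact hfin ▸ x.2

lemma upper_inv (f : Fin n → Fin s) (g : Matrix (Fin n) (Fin n) F) (hg : IsUnit g)
    (hsh : ∀ i j, f j < f i → g i j = 0) : ∀ i j, f j < f i → g⁻¹ i j = 0 := by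
  have : g⁻¹ ∈ zeroSub (F := F) (fun i j => f j < f i) := by
    apply inv_mem_of_mul_closed _ g hg
    · intro i j h
      exact Matrix.one_apply_ne (by rintro rfl; exact lt_irrefl _ h)
    · intro x hx i j h
      rw [Matrix.mul_apply]
      apply Finset.sum_eq_zero
      intro k _
      by_cases hk : f j < f k
      · rw [hx k j hk, mul_zero]
      · rw [hsh i k (lt_of_le_of_lt (le_of_not_gt hk) h), zero_mul]
  exact this

lemma Rshape_inv (f : Fin n → Fin s) (t : Matrix (Fin n) (Fin n) F) (ht : IsUnit t)
    (hsh : ∀ i j, f i ≠ f j → t i j = 0) : ∀ i j, f i ≠ f j → t⁻¹ i j = 0 := by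
  have : t⁻¹ ∈ zeroSub (F := F) (fun i j => f i ≠ f j) := by
    apply inv_mem_of_mul_closed _ t ht
    · intro i j h
      exact Matrix.one_apply_ne (by rintro rfl; exact h rfl)
    · intro x hx i j h
      rw [Matrix.mul_apply]
      apply Finset.sum_eq_zero
      intro k _
      by_cases hk : f i = f k
      · rw [hx k j (fun hkj => h (hk.trans hkj)), mul_zero]
      · rw [hsh i k hk, zero_mul]
  exact this

lemma mul_std_mul_apply (γ δ : Matrix (Fin n) (Fin n) F) (m c a b : Fin n) :
    (γ * Matrix.single m c (1 : F) * δ) a b = γ a m * δ c b := by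
  rw [Matrix.mul_apply, Finset.sum_eq_single c]
  · rw [Matrix.mul_single_apply_same, mul_one]
  · intro k _ hk
    rw [Matrix.mul_single_apply_of_ne _ _ _ _ _ hk, zero_mul]
  · intro h; exact absurd (Finset.mem_univ c) h

lemma lamOf_std (Λ : Matrix (Fin n) (Fin n) F) (i0 j0 : Fin n) :
    lamOf F Λ (Matrix.single i0 j0 (1:F)) = Λ i0 j0 := by
  unfold lamOf
  rw [Finset.sum_eq_single i0]
  · rw [Finset.sum_eq_single j0]
    · simp [Matrix.single]
    · intro b _ hb
      simp only [Matrix.single, Matrix.of_apply]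
      rw [if_neg (by rintro ⟨_, rfl⟩; exact hb rfl), mul_zero]
    · intro h; exact absurd (Finset.mem_univ j0) h
  · intro a _ ha
    apply Finset.sum_eq_zero; intro b _
    simp only [Matrix.single, Matrix.of_apply]
    rw [if_neg (by rintro ⟨rfl, _⟩; exact ha rfl), mul_zero]
  · intro h; exact absurd (Finset.mem_univ i0) h

lemma lam_mul_std (Λ z : Matrix (Fin n) (Fin n) F) (k' j : Fin n) :
    lamOf F Λ (z * Matrix.single k' j (1:F)) = ∑ a, Λ a j * z a k' := by
  unfold lamOf
  apply Finset.sum_congr rfl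
  intro a _
  rw [Finset.sum_eq_single j]
  · rw [Matrix.mul_single_apply_same, mul_one]
  · intro b _ hb
    rw [Matrix.mul_single_apply_of_ne _ _ _ _ _ hb, mul_zero]
  · intro h; exact absurd (Finset.mem_univ j) h

lemma lam_std_mul (Λ y : Matrix (Fin n) (Fin n) F) (i0 j0 : Fin n) :
    lamOf F Λ (Matrix.single i0 j0 (1:F) * y) = ∑ b, Λ i0 b * y j0 b := by
  unfold lamOf
  rw [Finset.sum_eq_single i0]
  · apply Finset.sum_congr rfl; intro b _
    rw [Matrix.single_mul_apply_same, one_mul]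
  · intro a _ ha
    apply Finset.sum_eq_zero; intro b _
    rw [Matrix.single_mul_apply_of_ne _ _ _ _ _ ha, mul_zero]
  · intro h; exact absurd (Finset.mem_univ i0) h

lemma lamOf_conj_std (Λ γ δ : Matrix (Fin n) (Fin n) F) (m c : Fin n) :
    lamOf F Λ (γ * Matrix.single m c (1:F) * δ)
      = ∑ b, (∑ a, Λ a b * γ a m) * δ c b := by
  unfold lamOf
  rw [Finset.sum_comm]
  apply Finset.sum_congr rfl
  intro b _
  rw [Finset.sum_mul]
  apply Finset.sum_congr rfl
  intro a _
  rw [mul_std_mul_apply, ← mul_assoc]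

lemma mem_unique {nr : ℕ} (A : Fin nr → Finset (Fin n))
    (hd : ∀ τ τ', τ ≠ τ' → Disjoint (A τ) (A τ')) {i : Fin n} {τ τ' : Fin nr}
    (h1 : i ∈ A τ) (h2 : i ∈ A τ') : τ = τ' := by
  by_contra hne
  exact Finset.disjoint_left.mp (hd τ τ' hne) h1 h2

section ctx

variable {nr : ℕ} {A B : Fin nr → Finset (Fin n)} {Λ : Matrix (Fin n) (Fin n) F}
variable (hsupp : ∀ i j, Λ i j ≠ 0 → ∃ t, i ∈ A t ∧ j ∈ B t)
variable (hdisjA : ∀ t t', t ≠ t' → Disjoint (A t) (A t'))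
variable (hdisjB : ∀ t t', t ≠ t' → Disjoint (B t) (B t'))
include hsupp hdisjA hdisjB

omit hdisjA in
lemma loc_row {τ : Fin nr} {j : Fin n} (hj : j ∈ B τ) {i : Fin n} (hi : i ∉ A τ) :
    Λ i j = 0 := by
  by_contra h
  obtain ⟨τ', hA, hB⟩ := hsupp i j h
  exact hi ((mem_unique B hdisjB hB hj) ▸ hA)

omit hdisjB in
lemma loc_col {τ : Fin nr} {i : Fin n} (hi : i ∈ A τ) {j : Fin n} (hj : j ∉ B τ) :
    Λ i j = 0 := by
  by_contra h
  obtain ⟨τ', hA, hB⟩ := hsupp i j h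
  exact hj ((mem_unique A hdisjA hA hi) ▸ hB)

omit hdisjA hdisjB in
lemma row_zero {i : Fin n} (hi : ∀ τ, i ∉ A τ) (j : Fin n) : Λ i j = 0 := by
  by_contra h
  obtain ⟨τ', hA, _⟩ := hsupp i j h
  exact hi τ' hA

omit hdisjA hdisjB in
lemma col_zero {j : Fin n} (hj : ∀ τ, j ∉ B τ) (i : Fin n) : Λ i j = 0 := by
  by_contra h
  obtain ⟨τ', _, hB⟩ := hsupp i j h
  exact hj τ' hB

end ctx

lemma rookRow {nr : ℕ} (A B : Fin nr → Finset (Fin n)) (hc : ∀ τ, (B τ).card = (A τ).card)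
    (Λ : Matrix (Fin n) (Fin n) F)
    (hinv : ∀ τ, IsUnit (Matrix.of fun (a b : Fin (A τ).card) =>
      Λ (((A τ).orderIsoOfFin rfl a : Fin n)) (((B τ).orderIsoOfFin (hc τ) b : Fin n))))
    (τ : Fin nr) (v : Fin n → F)
    (h : ∀ j ∈ B τ, ∑ i ∈ A τ, v i * Λ i j = 0) : ∀ i ∈ A τ, v i = 0 := by
  intro i hi
  set eA := (A τ).orderIsoOfFin rfl with heA
  set eB := (B τ).orderIsoOfFin (hc τ) with heB
  set M : Matrix (Fin (A τ).card) (Fin (A τ).card) F :=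
    Matrix.of fun a b => Λ (eA a : Fin n) (eB b : Fin n) with hM
  have hMu : IsUnit M.det := (Matrix.isUnit_iff_isUnit_det M).mp (hinv τ)
  set w : Fin (A τ).card → F := fun a => v (eA a : Fin n) with hw
  have hvm : Matrix.vecMul w M = 0 := by
    funext bb
    have h1 : Matrix.vecMul w M bb = ∑ a, v (eA a : Fin n) * Λ (eA a : Fin n) (eB bb : Fin n) := by
      simp [Matrix.vecMul, dotProduct, hw, hM]
    have h2 : ∑ a, v (eA a : Fin n) * Λ (eA a : Fin n) (eB bb : Fin n)
        = ∑ x ∈ A τ, v x * Λ x (eB bb : Fin n) := by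
      rw [← Finset.sum_attach (A τ) (fun x => v x * Λ x (eB bb : Fin n)),
        ← Finset.univ_eq_attach]
      exact Equiv.sum_comp eA.toEquiv (fun x => v (x : Fin n) * Λ (x : Fin n) (eB bb : Fin n))
    rw [h1, h2]
    simpa using h (eB bb : Fin n) (eB bb).2
  have hw0 : w = 0 := by
    have h3 := congrArg (fun u => Matrix.vecMul u M⁻¹) hvm
    simpa [Matrix.vecMul_vecMul, Matrix.mul_nonsing_inv M hMu] using h3
  have h4 : v i = w (eA.symm ⟨i, hi⟩) := by
    rw [hw]; simp
  rw [h4, hw0]; rfl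

lemma rookCol {nr : ℕ} (A B : Fin nr → Finset (Fin n)) (hc : ∀ τ, (B τ).card = (A τ).card)
    (Λ : Matrix (Fin n) (Fin n) F)
    (hinv : ∀ τ, IsUnit (Matrix.of fun (a b : Fin (A τ).card) =>
      Λ (((A τ).orderIsoOfFin rfl a : Fin n)) (((B τ).orderIsoOfFin (hc τ) b : Fin n))))
    (τ : Fin nr) (v : Fin n → F)
    (h : ∀ i ∈ A τ, ∑ j ∈ B τ, Λ i j * v j = 0) : ∀ j ∈ B τ, v j = 0 := by
  intro j hj
  set eA := (A τ).orderIsoOfFin rfl with heA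
  set eB := (B τ).orderIsoOfFin (hc τ) with heB
  set M : Matrix (Fin (A τ).card) (Fin (A τ).card) F :=
    Matrix.of fun a b => Λ (eA a : Fin n) (eB b : Fin n) with hM
  have hMu : IsUnit M.det := (Matrix.isUnit_iff_isUnit_det M).mp (hinv τ)
  set w : Fin (A τ).card → F := fun b => v (eB b : Fin n) with hw
  have hvm : Matrix.mulVec M w = 0 := by
    funext aa
    have h1 : Matrix.mulVec M w aa = ∑ b, Λ (eA aa : Fin n) (eB b : Fin n) * v (eB b : Fin n) := by
      simp [Matrix.mulVec, dotProduct, hw, hM]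
    have h2 : ∑ b, Λ (eA aa : Fin n) (eB b : Fin n) * v (eB b : Fin n)
        = ∑ x ∈ B τ, Λ (eA aa : Fin n) x * v x := by
      rw [← Finset.sum_attach (B τ) (fun x => Λ (eA aa : Fin n) x * v x),
        ← Finset.univ_eq_attach]
      exact Equiv.sum_comp eB.toEquiv (fun x => Λ (eA aa : Fin n) (x : Fin n) * v (x : Fin n))
    rw [h1, h2]
    simpa using h (eA aa : Fin n) (eA aa).2
  have hw0 : w = 0 := by
    have h3 := congrArg (fun u => Matrix.mulVec M⁻¹ u) hvm
    simpa [Matrix.mulVec_mulVec, Matrix.nonsing_inv_mul M hMu] using h3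
  have h4 : v j = w (eB.symm ⟨j, hj⟩) := by
    rw [hw]; simp
  rw [h4, hw0]; rfl
lemma std_mem_JSet (f : Fin n → Fin s) {i0 j0 : Fin n} (h : f i0 < f j0) :
    Matrix.single i0 j0 (1:F) ∈ JSet F f := by
  intro a b hab
  simp only [Matrix.single, Matrix.of_apply]
  rw [if_neg]
  rintro ⟨rfl, rfl⟩
  exact hab h

lemma std_mem_Jrt (f : Fin n → Fin s) (Λ : Matrix (Fin n) (Fin n) F) {i0 j0 : Fin n}
    (h : f i0 < f j0) (hrow : ∀ b, Λ i0 b ≠ 0 → ¬ f j0 < f b) :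
    Matrix.single i0 j0 (1:F) ∈ Jrt F f Λ := by
  refine ⟨std_mem_JSet f h, fun y hy => ?_⟩
  rw [lam_std_mul]
  apply Finset.sum_eq_zero
  intro b _
  by_cases hb : Λ i0 b = 0
  · rw [hb, zero_mul]
  · rw [hy j0 b (hrow b hb), mul_zero]

lemma Jrt_entry {nr : ℕ} (f : Fin n → Fin s) (A B : Fin nr → Finset (Fin n))
    (hc : ∀ τ, (B τ).card = (A τ).card) (Λ : Matrix (Fin n) (Fin n) F)
    (hinv : ∀ τ, IsUnit (Matrix.of fun (a b : Fin (A τ).card) =>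
      Λ (((A τ).orderIsoOfFin rfl a : Fin n)) (((B τ).orderIsoOfFin (hc τ) b : Fin n))))
    (hsupp : ∀ i j, Λ i j ≠ 0 → ∃ t, i ∈ A t ∧ j ∈ B t)
    (hdisjB : ∀ t t', t ≠ t' → Disjoint (B t) (B t'))
    (ll : Fin nr → Fin s) (hfB : ∀ τ, ∀ j ∈ B τ, f j = ll τ)
    {z : Matrix (Fin n) (Fin n) F} (hz : z ∈ Jrt F f Λ) (τ : Fin nr) {i : Fin n}
    (hi : i ∈ A τ) (k' : Fin n) (hk' : f k' < ll τ) : z i k' = 0 := by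
  refine rookRow A B hc Λ hinv τ (fun a => z a k') (fun j hj => ?_) i hi
  have hJ : Matrix.single k' j (1:F) ∈ JSet F f :=
    std_mem_JSet f (by rw [hfB τ j hj]; exact hk')
  have h0 := hz.2 _ hJ
  rw [lam_mul_std] at h0
  calc ∑ a ∈ A τ, z a k' * Λ a j = ∑ a ∈ A τ, Λ a j * z a k' :=
        Finset.sum_congr rfl fun a _ => mul_comm _ _
  _ = ∑ a, Λ a j * z a k' := Finset.sum_subset (Finset.subset_univ _)
        (fun a _ ha => by rw [loc_row hsupp hdisjB hj ha, zero_mul])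
  _ = 0 := h0

lemma keyA {nr : ℕ} (f : Fin n → Fin s) (hsurj : Function.Surjective f)
    (A B : Fin nr → Finset (Fin n)) (hc : ∀ τ, (B τ).card = (A τ).card)
    (Λ : Matrix (Fin n) (Fin n) F)
    (hinv : ∀ τ, IsUnit (Matrix.of fun (a b : Fin (A τ).card) =>
      Λ (((A τ).orderIsoOfFin rfl a : Fin n)) (((B τ).orderIsoOfFin (hc τ) b : Fin n))))
    (hsupp : ∀ i j, Λ i j ≠ 0 → ∃ t, i ∈ A t ∧ j ∈ B t)
    (hdisjA : ∀ t t', t ≠ t' → Disjoint (A t) (A t'))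
    (hdisjB : ∀ t t', t ≠ t' → Disjoint (B t) (B t'))
    (kk ll : Fin nr → Fin s) (hkl : ∀ τ, kk τ < ll τ)
    (hfA : ∀ τ, ∀ i ∈ A τ, f i = kk τ) (hfB : ∀ τ, ∀ j ∈ B τ, f j = ll τ)
    (γ : Matrix (Fin n) (Fin n) F) (hγ : γ ∈ StabSet F f Λ)
    (m0 : Fin n) (hm0 : ∀ τ, m0 ∉ A τ) (τ0 : Fin nr) (i0 : Fin n) (hi0 : i0 ∈ A τ0)
    (hfm : f m0 = kk τ0) : γ i0 m0 = 0 := by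
  obtain ⟨⟨hγu, hγsh⟩, hconj, hlam⟩ := hγ
  have hγd : IsUnit γ.det := (Matrix.isUnit_iff_isUnit_det γ).mp hγu
  have hδsh : ∀ i j, f j < f i → γ⁻¹ i j = 0 := upper_inv f γ hγu hγsh
  have hδγ : γ⁻¹ * γ = 1 := Matrix.nonsing_inv_mul γ hγd
  have hγδ : γ * γ⁻¹ = 1 := Matrix.mul_nonsing_inv γ hγd
  set l : Fin s := ll τ0 with hl
  have hdiag : ∀ c : Fin n, ∃ k, f k = f c ∧ γ⁻¹ c k ≠ 0 := by
    intro c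
    by_contra hcon
    push_neg at hcon
    have h1 : (1 : Matrix (Fin n) (Fin n) F) c c = 0 := by
      rw [← hδγ, Matrix.mul_apply]
      apply Finset.sum_eq_zero
      intro k _
      rcases lt_trichotomy (f k) (f c) with h | h | h
      · rw [hδsh c k h, zero_mul]
      · rw [hcon k h, zero_mul]
      · rw [hγsh k c h, mul_zero]
    rw [Matrix.one_apply_eq] at h1
    exact one_ne_zero h1
  have hstd : ∀ c : Fin n, f c = l → Matrix.single m0 c (1:F) ∈ Jrt F f Λ := by
    intro c hcl
    apply std_mem_Jrt f Λ
    · rw [hcl, hfm]; exact hkl τ0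
    · intro b hb
      exact absurd (row_zero hsupp hm0 b) hb
  have hkill : ∀ τ', l < ll τ' → ∀ a ∈ A τ', γ a m0 = 0 := by
    intro τ' hτ' a ha
    obtain ⟨c0, hc0⟩ := hsurj l
    obtain ⟨k', hk'f, hk'ne⟩ := hdiag c0
    have hz : γ * Matrix.single m0 c0 (1:F) * γ⁻¹ ∈ Jrt F f Λ :=
      (hconj _).mp (hstd c0 hc0)
    have h2 := Jrt_entry f A B hc Λ hinv hsupp hdisjB ll hfB hz τ' ha k'
      (by rw [hk'f, hc0]; exact hτ')
    rw [mul_std_mul_apply] at h2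
    rcases mul_eq_zero.mp h2 with h | h
    · exact h
    · exact absurd h hk'ne
  have hρhigh : ∀ b, l < f b → (∑ a, Λ a b * γ a m0) = 0 := by
    intro b hb
    apply Finset.sum_eq_zero
    intro a _
    by_cases hΛ : Λ a b = 0
    · rw [hΛ, zero_mul]
    · obtain ⟨τ', haA, hbB⟩ := hsupp a b hΛ
      rw [hkill τ' (by rw [← hfB τ' b hbB]; exact hb) a haA, mul_zero]
  have hE : ∀ c, f c = l → ∑ b, (∑ a, Λ a b * γ a m0) * γ⁻¹ c b = 0 := by
    intro c hcl
    have h1 := hlam _ (hstd c hcl)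
    rw [lamOf_conj_std, lamOf_std, row_zero hsupp hm0 c] at h1
    exact h1
  have hρl : ∀ j, f j = l → (∑ a, Λ a j * γ a m0) = 0 := by
    intro j hj
    have h1 : (∑ b, (∑ a, Λ a b * γ a m0) * (γ * γ⁻¹) j b)
        = ∑ a, Λ a j * γ a m0 := by
      rw [hγδ]
      calc ∑ b, (∑ a, Λ a b * γ a m0) * (1 : Matrix (Fin n) (Fin n) F) j b
          = (∑ a, Λ a j * γ a m0) * (1 : Matrix (Fin n) (Fin n) F) j j :=
            Finset.sum_eq_single j
              (fun b _ hb => by rw [Matrix.one_apply_ne (Ne.symm hb), mul_zero])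
              (fun h => absurd (Finset.mem_univ j) h)
      _ = ∑ a, Λ a j * γ a m0 := by rw [Matrix.one_apply_eq, mul_one]
    have h2 : (∑ b, (∑ a, Λ a b * γ a m0) * (γ * γ⁻¹) j b)
        = ∑ c, γ j c * (∑ b, (∑ a, Λ a b * γ a m0) * γ⁻¹ c b) := by
      calc (∑ b, (∑ a, Λ a b * γ a m0) * (γ * γ⁻¹) j b)
          = ∑ b, ∑ c, (∑ a, Λ a b * γ a m0) * (γ j c * γ⁻¹ c b) := by
            apply Finset.sum_congr rfl; intro b _
            rw [Matrix.mul_apply, Finset.mul_sum]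
      _ = ∑ c, ∑ b, (∑ a, Λ a b * γ a m0) * (γ j c * γ⁻¹ c b) := Finset.sum_comm
      _ = ∑ c, γ j c * (∑ b, (∑ a, Λ a b * γ a m0) * γ⁻¹ c b) := by
            apply Finset.sum_congr rfl; intro c _
            rw [Finset.mul_sum]
            apply Finset.sum_congr rfl; intro b _
            ring
    rw [← h1, h2]
    apply Finset.sum_eq_zero
    intro c _
    rcases lt_trichotomy (f c) l with h | h | h
    · rw [hγsh j c (by rw [hj]; exact h), zero_mul]
    · rw [hE c h, mul_zero]
    · have h3 : (∑ b, (∑ a, Λ a b * γ a m0) * γ⁻¹ c b) = 0 := by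
        apply Finset.sum_eq_zero
        intro b _
        rcases lt_trichotomy (f b) (f c) with hbc | hbc | hbc
        · rw [hδsh c b hbc, mul_zero]
        · rw [hρhigh b (by rw [hbc]; exact h), zero_mul]
        · rw [hρhigh b (h.trans hbc), zero_mul]
      rw [h3, mul_zero]
  have hfin : ∀ j ∈ B τ0, ∑ a ∈ A τ0, γ a m0 * Λ a j = 0 := by
    intro j hj
    have h0 := hρl j (hfB τ0 j hj)
    calc ∑ a ∈ A τ0, γ a m0 * Λ a j = ∑ a ∈ A τ0, Λ a j * γ a m0 :=
          Finset.sum_congr rfl fun a _ => mul_comm _ _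
    _ = ∑ a, Λ a j * γ a m0 := Finset.sum_subset (Finset.subset_univ _)
          (fun a _ ha => by rw [loc_row hsupp hdisjB hj ha, zero_mul])
    _ = 0 := h0
  exact rookRow A B hc Λ hinv τ0 (fun a => γ a m0) hfin i0 hi0

lemma keyB {nr : ℕ} (f : Fin n → Fin s)
    (A B : Fin nr → Finset (Fin n)) (hc : ∀ τ, (B τ).card = (A τ).card)
    (Λ : Matrix (Fin n) (Fin n) F)
    (hinv : ∀ τ, IsUnit (Matrix.of fun (a b : Fin (A τ).card) =>
      Λ (((A τ).orderIsoOfFin rfl a : Fin n)) (((B τ).orderIsoOfFin (hc τ) b : Fin n))))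
    (hsupp : ∀ i j, Λ i j ≠ 0 → ∃ t, i ∈ A t ∧ j ∈ B t)
    (hdisjA : ∀ t t', t ≠ t' → Disjoint (A t) (A t'))
    (hdisjB : ∀ t t', t ≠ t' → Disjoint (B t) (B t'))
    (kk ll : Fin nr → Fin s) (hkl : ∀ τ, kk τ < ll τ)
    (hfA : ∀ τ, ∀ i ∈ A τ, f i = kk τ) (hfB : ∀ τ, ∀ j ∈ B τ, f j = ll τ)
    (γ : Matrix (Fin n) (Fin n) F) (hγ : γ ∈ StabSet F f Λ)
    (m0 : Fin n) (hm0 : ∀ τ, m0 ∉ B τ) (τ0 : Fin nr) (j0 : Fin n) (hj0 : j0 ∈ B τ0)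
    (hfm : f m0 = ll τ0) : γ m0 j0 = 0 := by
  obtain ⟨⟨hγu, hγsh⟩, hconj, hlam⟩ := hγ
  have hγd : IsUnit γ.det := (Matrix.isUnit_iff_isUnit_det γ).mp hγu
  have hδsh : ∀ i j, f j < f i → γ⁻¹ i j = 0 := upper_inv f γ hγu hγsh
  have hδγ : γ⁻¹ * γ = 1 := Matrix.nonsing_inv_mul γ hγd
  have hγδ : γ * γ⁻¹ = 1 := Matrix.mul_nonsing_inv γ hγd
  set l : Fin s := ll τ0 with hl
  have hdiag : ∀ c : Fin n, ∃ k, f k = f c ∧ γ⁻¹ c k ≠ 0 := by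
    intro c
    by_contra hcon
    push_neg at hcon
    have h1 : (1 : Matrix (Fin n) (Fin n) F) c c = 0 := by
      rw [← hδγ, Matrix.mul_apply]
      apply Finset.sum_eq_zero
      intro k _
      rcases lt_trichotomy (f k) (f c) with h | h | h
      · rw [hδsh c k h, zero_mul]
      · rw [hcon k h, zero_mul]
      · rw [hγsh k c h, mul_zero]
    rw [Matrix.one_apply_eq] at h1
    exact one_ne_zero h1
  have hstd : ∀ k ∈ A τ0, ∀ m', f m' = l → Matrix.single k m' (1:F) ∈ Jrt F f Λ := by
    intro k hk m' hm'
    apply std_mem_Jrt f Λ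
    · rw [hm', hfA τ0 k hk]; exact hkl τ0
    · intro b hb
      obtain ⟨τ', hkA, hbB⟩ := hsupp k b hb
      have : τ' = τ0 := mem_unique A hdisjA hkA hk
      rw [hm', hfB τ' b hbB, this]
      exact lt_irrefl l
  have hkill : ∀ k ∈ A τ0, ∀ τ', l < ll τ' → ∀ a ∈ A τ', γ a k = 0 := by
    intro k hk τ' hτ' a ha
    obtain ⟨k', hk'f, hk'ne⟩ := hdiag m0
    have hz : γ * Matrix.single k m0 (1:F) * γ⁻¹ ∈ Jrt F f Λ :=
      (hconj _).mp (hstd k hk m0 hfm)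
    have h2 := Jrt_entry f A B hc Λ hinv hsupp hdisjB ll hfB hz τ' ha k'
      (by rw [hk'f, hfm]; exact hτ')
    rw [mul_std_mul_apply] at h2
    rcases mul_eq_zero.mp h2 with h | h
    · exact h
    · exact absurd h hk'ne
  have hfin : ∀ k ∈ A τ0, ∑ m' ∈ B τ0, Λ k m' * γ m0 m' = 0 := by
    intro k hk
    have hσhigh : ∀ b, l < f b → (∑ a, Λ a b * γ a k) = 0 := by
      intro b hb
      apply Finset.sum_eq_zero
      intro a _
      by_cases hΛ : Λ a b = 0
      · rw [hΛ, zero_mul]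
      · obtain ⟨τ', haA, hbB⟩ := hsupp a b hΛ
        rw [hkill k hk τ' (by rw [← hfB τ' b hbB]; exact hb) a haA, mul_zero]
    have hE : ∀ m', f m' = l → ∑ b, (∑ a, Λ a b * γ a k) * γ⁻¹ m' b = Λ k m' := by
      intro m' hm'
      have h1 := hlam _ (hstd k hk m' hm')
      rw [lamOf_conj_std, lamOf_std] at h1
      exact h1
    have hσl : ∀ j, f j = l → (∑ a, Λ a j * γ a k) = ∑ m', γ j m' * Λ k m' := by
      intro j hj
      have h1 : (∑ b, (∑ a, Λ a b * γ a k) * (γ * γ⁻¹) j b)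
          = ∑ a, Λ a j * γ a k := by
        rw [hγδ]
        calc ∑ b, (∑ a, Λ a b * γ a k) * (1 : Matrix (Fin n) (Fin n) F) j b
            = (∑ a, Λ a j * γ a k) * (1 : Matrix (Fin n) (Fin n) F) j j :=
              Finset.sum_eq_single j
                (fun b _ hb => by rw [Matrix.one_apply_ne (Ne.symm hb), mul_zero])
                (fun h => absurd (Finset.mem_univ j) h)
        _ = ∑ a, Λ a j * γ a k := by rw [Matrix.one_apply_eq, mul_one]
      have h2 : (∑ b, (∑ a, Λ a b * γ a k) * (γ * γ⁻¹) j b)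
          = ∑ m', γ j m' * (∑ b, (∑ a, Λ a b * γ a k) * γ⁻¹ m' b) := by
        calc (∑ b, (∑ a, Λ a b * γ a k) * (γ * γ⁻¹) j b)
            = ∑ b, ∑ m', (∑ a, Λ a b * γ a k) * (γ j m' * γ⁻¹ m' b) := by
              apply Finset.sum_congr rfl; intro b _
              rw [Matrix.mul_apply, Finset.mul_sum]
        _ = ∑ m', ∑ b, (∑ a, Λ a b * γ a k) * (γ j m' * γ⁻¹ m' b) := Finset.sum_comm
        _ = ∑ m', γ j m' * (∑ b, (∑ a, Λ a b * γ a k) * γ⁻¹ m' b) := by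
              apply Finset.sum_congr rfl; intro m' _
              rw [Finset.mul_sum]
              apply Finset.sum_congr rfl; intro b _
              ring
      rw [← h1, h2]
      apply Finset.sum_congr rfl
      intro m' _
      rcases lt_trichotomy (f m') l with h | h | h
      · rw [hγsh j m' (by rw [hj]; exact h), zero_mul, zero_mul]
      · rw [hE m' h]
      · have h3 : (∑ b, (∑ a, Λ a b * γ a k) * γ⁻¹ m' b) = 0 := by
          apply Finset.sum_eq_zero
          intro b _
          rcases lt_trichotomy (f b) (f m') with hbc | hbc | hbc
          · rw [hδsh m' b hbc, mul_zero]
          · rw [hσhigh b (by rw [hbc]; exact h), zero_mul]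
          · rw [hσhigh b (h.trans hbc), zero_mul]
        have h4 : Λ k m' = 0 := by
          apply loc_col hsupp hdisjA hk
          intro hmem
          rw [hfB τ0 m' hmem] at h
          exact lt_irrefl l h
        rw [h3, h4]
    have h5 := hσl m0 hfm
    have h6 : (∑ a, Λ a m0 * γ a k) = 0 := by
      apply Finset.sum_eq_zero
      intro a _
      rw [col_zero hsupp hm0 a, zero_mul]
    rw [h6] at h5
    calc ∑ m' ∈ B τ0, Λ k m' * γ m0 m' = ∑ m' ∈ B τ0, γ m0 m' * Λ k m' :=
          Finset.sum_congr rfl fun a _ => mul_comm _ _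
    _ = ∑ m', γ m0 m' * Λ k m' := Finset.sum_subset (Finset.subset_univ _)
          (fun m' _ hm' => by rw [loc_col hsupp hdisjA hk hm', mul_zero])
    _ = 0 := h5.symm
  exact rookCol A B hc Λ hinv τ0 (fun m' => γ m0 m') hfin j0 hj0
lemma rcirc_row {nr : ℕ} (f : Fin n → Fin s)
    (A B : Fin nr → Finset (Fin n)) (hc : ∀ τ, (B τ).card = (A τ).card)
    (Λ : Matrix (Fin n) (Fin n) F)
    (hinv : ∀ τ, IsUnit (Matrix.of fun (a b : Fin (A τ).card) =>
      Λ (((A τ).orderIsoOfFin rfl a : Fin n)) (((B τ).orderIsoOfFin (hc τ) b : Fin n))))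
    (hsupp : ∀ i j, Λ i j ≠ 0 → ∃ t, i ∈ A t ∧ j ∈ B t)
    (hdisjB : ∀ t t', t ≠ t' → Disjoint (B t) (B t'))
    (kk ll : Fin nr → Fin s) (hkl : ∀ τ, kk τ < ll τ)
    (hfA : ∀ τ, ∀ i ∈ A τ, f i = kk τ) (hfB : ∀ τ, ∀ j ∈ B τ, f j = ll τ)
    (r : Matrix (Fin n) (Fin n) F) (hr : r ∈ RcircSet F f Λ) :
    ∀ τ, ∀ i ∈ A τ, ∀ k, r i k = if i = k then 1 else 0 := by
  intro τ i hi k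
  by_cases hfk : f k = kk τ
  · have hcond : ∀ j ∈ B τ, ∑ a ∈ A τ, (r a k - (if a = k then (1:F) else 0)) * Λ a j = 0 := by
      intro j hj
      have hJS : Matrix.single k j (1:F) ∈ JSet F f :=
        std_mem_JSet f (by rw [hfk, hfB τ j hj]; exact hkl τ)
      have h1 := (hr.2 _ hJS).1
      rw [lam_mul_std, lamOf_std] at h1
      have h2 : ∑ a ∈ A τ, r a k * Λ a j = Λ k j := by
        calc ∑ a ∈ A τ, r a k * Λ a j = ∑ a ∈ A τ, Λ a j * r a k :=
              Finset.sum_congr rfl fun a _ => mul_comm _ _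
        _ = ∑ a, Λ a j * r a k := Finset.sum_subset (Finset.subset_univ _)
              (fun a _ ha => by rw [loc_row hsupp hdisjB hj ha, zero_mul])
        _ = Λ k j := h1
      have h3 : ∑ a ∈ A τ, (if a = k then (1:F) else 0) * Λ a j = Λ k j := by
        have hco : ∀ a ∈ A τ, (if a = k then (1:F) else 0) * Λ a j
            = if a = k then Λ a j else 0 := by
          intro a _; split <;> simp
        rw [Finset.sum_congr rfl hco, Finset.sum_ite_eq' (A τ) k (fun a => Λ a j)]
        by_cases hkA : k ∈ A τ
        · rw [if_pos hkA]
        · rw [if_neg hkA, loc_row hsupp hdisjB hj hkA]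
      rw [Finset.sum_congr rfl (fun a _ => sub_mul (r a k) _ (Λ a j)),
        Finset.sum_sub_distrib, h2, h3, sub_self]
    have h4 := rookRow A B hc Λ hinv τ (fun a => r a k - (if a = k then (1:F) else 0))
      hcond i hi
    exact sub_eq_zero.mp h4
  · have hif : f i ≠ f k := by rw [hfA τ i hi]; exact fun h => hfk h.symm
    have hik : i ≠ k := by rintro rfl; exact hif rfl
    rw [if_neg hik]
    exact hr.1.2 i k hif

lemma rcirc_col {nr : ℕ} (f : Fin n → Fin s)
    (A B : Fin nr → Finset (Fin n)) (hc : ∀ τ, (B τ).card = (A τ).card)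
    (Λ : Matrix (Fin n) (Fin n) F)
    (hinv : ∀ τ, IsUnit (Matrix.of fun (a b : Fin (A τ).card) =>
      Λ (((A τ).orderIsoOfFin rfl a : Fin n)) (((B τ).orderIsoOfFin (hc τ) b : Fin n))))
    (hsupp : ∀ i j, Λ i j ≠ 0 → ∃ t, i ∈ A t ∧ j ∈ B t)
    (hdisjA : ∀ t t', t ≠ t' → Disjoint (A t) (A t'))
    (kk ll : Fin nr → Fin s) (hkl : ∀ τ, kk τ < ll τ)
    (hfA : ∀ τ, ∀ i ∈ A τ, f i = kk τ) (hfB : ∀ τ, ∀ j ∈ B τ, f j = ll τ)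
    (r : Matrix (Fin n) (Fin n) F) (hr : r ∈ RcircSet F f Λ) :
    ∀ τ, ∀ j ∈ B τ, ∀ k, r k j = if k = j then 1 else 0 := by
  intro τ j hj k
  by_cases hfk : f k = ll τ
  · have hcond : ∀ i ∈ A τ, ∑ b ∈ B τ, Λ i b * (r k b - (if k = b then (1:F) else 0)) = 0 := by
      intro i hi
      have hJS : Matrix.single i k (1:F) ∈ JSet F f :=
        std_mem_JSet f (by rw [hfk, hfA τ i hi]; exact hkl τ)
      have h1 := (hr.2 _ hJS).2
      rw [lam_std_mul, lamOf_std] at h1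
      have h2 : ∑ b ∈ B τ, Λ i b * r k b = Λ i k := by
        calc ∑ b ∈ B τ, Λ i b * r k b
            = ∑ b, Λ i b * r k b := Finset.sum_subset (Finset.subset_univ _)
              (fun b _ hb => by rw [loc_col hsupp hdisjA hi hb, zero_mul])
        _ = Λ i k := h1
      have h3 : ∑ b ∈ B τ, Λ i b * (if k = b then (1:F) else 0) = Λ i k := by
        have hco : ∀ b ∈ B τ, Λ i b * (if k = b then (1:F) else 0)
            = if k = b then Λ i b else 0 := by
          intro b _; split <;> simp
        rw [Finset.sum_congr rfl hco, Finset.sum_ite_eq (B τ) k (fun b => Λ i b)]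
        by_cases hkB : k ∈ B τ
        · rw [if_pos hkB]
        · rw [if_neg hkB, loc_col hsupp hdisjA hi hkB]
      rw [Finset.sum_congr rfl (fun b _ => mul_sub (Λ i b) (r k b) _),
        Finset.sum_sub_distrib, h2, h3, sub_self]
    have h4 := rookCol A B hc Λ hinv τ (fun b => r k b - (if k = b then (1:F) else 0))
      hcond j hj
    exact sub_eq_zero.mp h4
  · have hkj : f k ≠ f j := by rw [hfB τ j hj]; exact hfk
    have hk : k ≠ j := by rintro rfl; exact hkj rfl
    rw [if_neg hk]
    exact hr.1.2 k j hkj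

lemma lam_left_transfer (Λ ρ x : Matrix (Fin n) (Fin n) F)
    (h : ∀ k j, (∑ i, ρ i k * Λ i j) = Λ k j) :
    lamOf F Λ (ρ * x) = lamOf F Λ x := by
  unfold lamOf
  calc ∑ i, ∑ j, Λ i j * (ρ * x) i j
      = ∑ i, ∑ j, ∑ k, (ρ i k * Λ i j) * x k j := by
        apply Finset.sum_congr rfl; intro i _
        apply Finset.sum_congr rfl; intro j _
        rw [Matrix.mul_apply, Finset.mul_sum]
        apply Finset.sum_congr rfl; intro k _
        ring
  _ = ∑ i, ∑ k, ∑ j, (ρ i k * Λ i j) * x k j := by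
        apply Finset.sum_congr rfl; intro i _
        exact Finset.sum_comm
  _ = ∑ k, ∑ i, ∑ j, (ρ i k * Λ i j) * x k j := Finset.sum_comm
  _ = ∑ k, ∑ j, ∑ i, (ρ i k * Λ i j) * x k j := by
        apply Finset.sum_congr rfl; intro k _
        exact Finset.sum_comm
  _ = ∑ k, ∑ j, Λ k j * x k j := by
        apply Finset.sum_congr rfl; intro k _
        apply Finset.sum_congr rfl; intro j _
        rw [← Finset.sum_mul, h k j]

lemma lam_right_transfer (Λ ρ x : Matrix (Fin n) (Fin n) F)
    (h : ∀ k i, (∑ j, Λ i j * ρ k j) = Λ i k) :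
    lamOf F Λ (x * ρ) = lamOf F Λ x := by
  unfold lamOf
  calc ∑ i, ∑ j, Λ i j * (x * ρ) i j
      = ∑ i, ∑ j, ∑ k, x i k * (Λ i j * ρ k j) := by
        apply Finset.sum_congr rfl; intro i _
        apply Finset.sum_congr rfl; intro j _
        rw [Matrix.mul_apply, Finset.mul_sum]
        apply Finset.sum_congr rfl; intro k _
        ring
  _ = ∑ i, ∑ k, ∑ j, x i k * (Λ i j * ρ k j) := by
        apply Finset.sum_congr rfl; intro i _
        exact Finset.sum_comm
  _ = ∑ i, ∑ k, Λ i k * x i k := by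
        apply Finset.sum_congr rfl; intro i _
        apply Finset.sum_congr rfl; intro k _
        rw [← Finset.mul_sum, h k i, mul_comm]
end Stmt13Aux
open Stmt13Aux in
/-- if `g₀ = b t ∈ S` with `b ∈ N`, `t ∈ R`, and `r ∈ R°_𝔻`, then
`t r t⁻¹ ∈ R°_𝔻`, and the formula `g₀ · r = t r t⁻¹` is well defined (independent of the
decomposition), hence defines an action of `S` on `R°_𝔻`. -/
theorem stmt13 {n s : ℕ} (f : Fin n → Fin s)
    (hmono : Monotone f) (hsurj : Function.Surjective f)
    (m : ℕ) (A B : Fin m → Finset (Fin n)) (hc : ∀ t, (B t).card = (A t).card)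
    (hblocks : ∀ t, ∃ k l : Fin s, k < l ∧ (∀ i ∈ A t, f i = k) ∧ (∀ j ∈ B t, f j = l))
    (hdisjA : ∀ t t', t ≠ t' → Disjoint (A t) (A t'))
    (hdisjB : ∀ t t', t ≠ t' → Disjoint (B t) (B t'))
    (Λ : Matrix (Fin n) (Fin n) F)
    (hsupp : ∀ i j, Λ i j ≠ 0 → ∃ t, i ∈ A t ∧ j ∈ B t)
    (hinv : ∀ t, IsUnit (Matrix.of fun (a b : Fin (A t).card) =>
      Λ (((A t).orderIsoOfFin rfl a : Fin n)) (((B t).orderIsoOfFin (hc t) b : Fin n))))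
    (g₀ b t : Matrix (Fin n) (Fin n) F)
    (hg₀ : g₀ ∈ StabSet F f Λ) (hb : b ∈ NSet F f) (ht : t ∈ RSet F f)
    (hdec : g₀ = b * t)
    (r : Matrix (Fin n) (Fin n) F) (hr : r ∈ RcircSet F f Λ) :
    t * r * t⁻¹ ∈ RcircSet F f Λ ∧
      ∀ b' t' : Matrix (Fin n) (Fin n) F,
        b' ∈ NSet F f → t' ∈ RSet F f → g₀ = b' * t' →
          t' * r * t'⁻¹ = t * r * t⁻¹ := by
  classical
  choose kk ll hkl hfA hfB using hblocks
  have hg₀u : IsUnit g₀ := hg₀.1.1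
  have hg₀sh : ∀ i j, f j < f i → g₀ i j = 0 := hg₀.1.2
  have hg₀d : IsUnit g₀.det := (Matrix.isUnit_iff_isUnit_det g₀).mp hg₀u
  have htu : IsUnit t := ht.1
  have htd : IsUnit t.det := (Matrix.isUnit_iff_isUnit_det t).mp htu
  have htsh : ∀ i j, f i ≠ f j → t i j = 0 := ht.2
  have hru : IsUnit r := hr.1.1
  have htinv_sh : ∀ i j, f i ≠ f j → t⁻¹ i j = 0 := Rshape_inv f t htu htsh
  have htinvu : IsUnit t⁻¹ := Matrix.isUnit_nonsing_inv_iff.mpr htu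
  -- diagonal blocks of any N·R-decomposition agree with those of g₀
  have hdiag_bt : ∀ (b1 t1 : Matrix (Fin n) (Fin n) F), b1 ∈ NSet F f → t1 ∈ RSet F f →
      g₀ = b1 * t1 → ∀ i j, f i = f j → t1 i j = g₀ i j := by
    intro b1 t1 hb1 ht1 hdec1 i j hij
    obtain ⟨u1, hu1, hbu1⟩ := hb1
    rw [hdec1, hbu1, Matrix.add_mul, Matrix.one_mul, Matrix.add_apply]
    have hz : (u1 * t1) i j = 0 := by
      rw [Matrix.mul_apply]
      apply Finset.sum_eq_zero
      intro k _
      by_cases hk : f k = f j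
      · rw [hu1 i k (by rw [hij, ← hk]; exact lt_irrefl _), zero_mul]
      · rw [ht1.2 k j hk, mul_zero]
    rw [hz, add_zero]
  have htg : ∀ i j, f i = f j → t i j = g₀ i j := hdiag_bt b t hb ht hdec
  -- uniqueness of the decomposition
  have huniq : ∀ b' t', b' ∈ NSet F f → t' ∈ RSet F f → g₀ = b' * t' → t' = t := by
    intro b' t' hb' ht' hdec'
    ext i j
    by_cases hij : f i = f j
    · rw [hdiag_bt b' t' hb' ht' hdec' i j hij, htg i j hij]
    · rw [ht'.2 i j hij, ht.2 i j hij]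
  -- g₀⁻¹ is also in the stabilizer
  have hg₀ii : g₀⁻¹⁻¹ = g₀ := Matrix.nonsing_inv_nonsing_inv g₀ hg₀d
  have hxy : ∀ x : Matrix (Fin n) (Fin n) F, g₀ * (g₀⁻¹ * x * g₀) * g₀⁻¹ = x := by
    intro x
    simp only [← Matrix.mul_assoc]
    rw [Matrix.mul_nonsing_inv g₀ hg₀d, Matrix.one_mul, Matrix.mul_assoc,
      Matrix.mul_nonsing_inv g₀ hg₀d, Matrix.mul_one]
  have hSinv : g₀⁻¹ ∈ StabSet F f Λ := by
    refine ⟨⟨Matrix.isUnit_nonsing_inv_iff.mpr hg₀u,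
      upper_inv f g₀ hg₀u hg₀sh⟩, ?_, ?_⟩
    · intro x
      rw [hg₀ii]
      constructor
      · intro hx
        exact (hg₀.2.1 _).mpr (by rw [hxy]; exact hx)
      · intro hx
        have h5 := (hg₀.2.1 _).mp hx
        rwa [hxy] at h5
    · intro x hx
      rw [hg₀ii]
      have hy : g₀⁻¹ * x * g₀ ∈ Jrt F f Λ := (hg₀.2.1 _).mpr (by rw [hxy]; exact hx)
      have h5 := hg₀.2.2 _ hy
      rw [hxy] at h5
      exact h5.symm
  -- structure of b⁻¹
  obtain ⟨u, hu, hbu⟩ := hb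
  have hbU : IsUnit b := by
    have hbg : b = g₀ * t⁻¹ := by
      rw [hdec, Matrix.mul_assoc, Matrix.mul_nonsing_inv t htd, Matrix.mul_one]
    rw [hbg]; exact hg₀u.mul htinvu
  have hbd : IsUnit b.det := (Matrix.isUnit_iff_isUnit_det b).mp hbU
  have hbsh : ∀ i j, f j < f i → b i j = 0 := by
    intro i j hij
    rw [hbu, Matrix.add_apply, Matrix.one_apply_ne (by rintro rfl; exact lt_irrefl _ hij),
      hu i j (fun h => lt_asymm h hij), add_zero]
  have hbinv_sh : ∀ i j, f j < f i → b⁻¹ i j = 0 := upper_inv f b hbU hbsh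
  have hbinv_diag : ∀ k j, f k = f j → b⁻¹ k j = (1 : Matrix (Fin n) (Fin n) F) k j := by
    intro k j hkj
    have h1 : (b * b⁻¹) k j = (1 : Matrix (Fin n) (Fin n) F) k j := by
      rw [Matrix.mul_nonsing_inv b hbd]
    rw [Matrix.mul_apply] at h1
    have h2 : ∀ a, b k a * b⁻¹ a j = if k = a then b⁻¹ a j else 0 := by
      intro a
      by_cases hka : k = a
      · subst hka
        rw [if_pos rfl, hbu, Matrix.add_apply, Matrix.one_apply_eq, hu k k (lt_irrefl _),
          add_zero, one_mul]
      · rw [if_neg hka]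
        by_cases hfa : f k < f a
        · rw [hbinv_sh a j (by rw [← hkj]; exact hfa), mul_zero]
        · rw [hbu, Matrix.add_apply, Matrix.one_apply_ne hka, hu k a hfa, add_zero, zero_mul]
    rw [Finset.sum_congr rfl (fun a _ => h2 a),
      Finset.sum_ite_eq Finset.univ k (fun a => b⁻¹ a j), if_pos (Finset.mem_univ k)] at h1
    exact h1
  have hg₀inv_eq : g₀⁻¹ = t⁻¹ * b⁻¹ := by rw [hdec, Matrix.mul_inv_rev]
  have htinv_diag : ∀ i j, f i = f j → t⁻¹ i j = g₀⁻¹ i j := by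
    intro i j hij
    rw [hg₀inv_eq, Matrix.mul_apply]
    symm
    calc ∑ k, t⁻¹ i k * b⁻¹ k j = t⁻¹ i j * b⁻¹ j j := by
          apply Finset.sum_eq_single j
          · intro k _ hkj
            by_cases hfk : f i = f k
            · rw [hbinv_diag k j (by rw [← hfk]; exact hij),
                Matrix.one_apply_ne hkj, mul_zero]
            · rw [htinv_sh i k hfk, zero_mul]
          · intro h; exact absurd (Finset.mem_univ j) h
    _ = t⁻¹ i j := by rw [hbinv_diag j j rfl, Matrix.one_apply_eq, mul_one]
  -- key structural facts for t and t⁻¹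
  have tA : ∀ τ0, ∀ i ∈ A τ0, ∀ k, (∀ τ, k ∉ A τ) → t i k = 0 := by
    intro τ0 i hi k hk
    by_cases hf : f i = f k
    · rw [htg i k hf]
      exact keyA f hsurj A B hc Λ hinv hsupp hdisjA hdisjB kk ll hkl hfA hfB g₀ hg₀
        k hk τ0 i hi (by rw [← hf, hfA τ0 i hi])
    · exact htsh i k hf
  have tinvB : ∀ τ0, ∀ j ∈ B τ0, ∀ k, (∀ τ, k ∉ B τ) → t⁻¹ k j = 0 := by
    intro τ0 j hj k hk
    by_cases hf : f k = f j
    · rw [htinv_diag k j hf]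
      exact keyB f A B hc Λ hinv hsupp hdisjA hdisjB kk ll hkl hfA hfB g₀⁻¹ hSinv
        k hk τ0 j hj (by rw [hf, hfB τ0 j hj])
    · exact htinv_sh k j hf
  -- entry description of r
  have hrow := rcirc_row f A B hc Λ hinv hsupp hdisjB kk ll hkl hfA hfB r hr
  have hcol := rcirc_col f A B hc Λ hinv hsupp hdisjA kk ll hkl hfA hfB r hr
  have hW0 : ∀ k, (∀ τ, k ∉ A τ) → ∀ j, (∑ i, t i k * Λ i j) = 0 := by
    intro k hk j
    apply Finset.sum_eq_zero
    intro i _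
    by_cases hΛ : Λ i j = 0
    · rw [hΛ, mul_zero]
    · obtain ⟨τ', hiA, _⟩ := hsupp i j hΛ
      rw [tA τ' i hiA k hk, zero_mul]
  have hV0 : ∀ k, (∀ τ, k ∉ B τ) → ∀ i, (∑ j, Λ i j * t⁻¹ k j) = 0 := by
    intro k hk i
    apply Finset.sum_eq_zero
    intro j _
    by_cases hΛ : Λ i j = 0
    · rw [hΛ, zero_mul]
    · obtain ⟨τ', _, hjB⟩ := hsupp i j hΛ
      rw [tinvB τ' j hjB k hk, mul_zero]
  -- claim 1 : (t r t⁻¹)ᵀ Λ = Λ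
  have claim1 : ∀ k j, (∑ i, (t * r * t⁻¹) i k * Λ i j) = Λ k j := by
    intro k j
    calc ∑ i, (t * r * t⁻¹) i k * Λ i j
        = ∑ i, ∑ bb, ((t * r) i bb * t⁻¹ bb k) * Λ i j := by
          apply Finset.sum_congr rfl; intro i _
          rw [Matrix.mul_apply, Finset.sum_mul]
    _ = ∑ bb, ∑ i, ((t * r) i bb * t⁻¹ bb k) * Λ i j := Finset.sum_comm
    _ = ∑ bb, t⁻¹ bb k * ∑ i, (t * r) i bb * Λ i j := by
          apply Finset.sum_congr rfl; intro bb _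
          rw [Finset.mul_sum]
          apply Finset.sum_congr rfl; intro i _
          ring
    _ = ∑ bb, t⁻¹ bb k * ∑ a, r a bb * (∑ i, t i a * Λ i j) := by
          apply Finset.sum_congr rfl; intro bb _
          congr 1
          calc ∑ i, (t * r) i bb * Λ i j
              = ∑ i, ∑ a, (t i a * r a bb) * Λ i j := by
                apply Finset.sum_congr rfl; intro i _
                rw [Matrix.mul_apply, Finset.sum_mul]
          _ = ∑ a, ∑ i, (t i a * r a bb) * Λ i j := Finset.sum_comm
          _ = ∑ a, r a bb * (∑ i, t i a * Λ i j) := by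
                apply Finset.sum_congr rfl; intro a _
                rw [Finset.mul_sum]
                apply Finset.sum_congr rfl; intro i _
                ring
    _ = ∑ bb, t⁻¹ bb k * (∑ i, t i bb * Λ i j) := by
          apply Finset.sum_congr rfl; intro bb _
          congr 1
          calc ∑ a, r a bb * (∑ i, t i a * Λ i j)
              = ∑ a, (if a = bb then (1:F) else 0) * (∑ i, t i a * Λ i j) := by
                apply Finset.sum_congr rfl; intro a _
                by_cases hA : ∃ τ, a ∈ A τ
                · obtain ⟨τ, haA⟩ := hA
                  rw [hrow τ a haA bb]
                · push_neg at hA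
                  rw [hW0 a hA j, mul_zero, mul_zero]
          _ = ∑ a, (if a = bb then (∑ i, t i a * Λ i j) else 0) := by
                apply Finset.sum_congr rfl; intro a _
                split <;> simp
          _ = ∑ i, t i bb * Λ i j := by
                rw [Finset.sum_ite_eq' Finset.univ bb (fun a => ∑ i, t i a * Λ i j),
                  if_pos (Finset.mem_univ bb)]
    _ = ∑ i, (∑ bb, t i bb * t⁻¹ bb k) * Λ i j := by
          calc ∑ bb, t⁻¹ bb k * (∑ i, t i bb * Λ i j)
              = ∑ bb, ∑ i, t⁻¹ bb k * (t i bb * Λ i j) := by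
                apply Finset.sum_congr rfl; intro bb _
                rw [Finset.mul_sum]
          _ = ∑ i, ∑ bb, t⁻¹ bb k * (t i bb * Λ i j) := Finset.sum_comm
          _ = ∑ i, (∑ bb, t i bb * t⁻¹ bb k) * Λ i j := by
                apply Finset.sum_congr rfl; intro i _
                rw [Finset.sum_mul]
                apply Finset.sum_congr rfl; intro bb _
                ring
    _ = Λ k j := by
          have hone : ∀ i, (∑ bb, t i bb * t⁻¹ bb k) = (1 : Matrix (Fin n) (Fin n) F) i k := by
            intro i
            rw [← Matrix.mul_apply, Matrix.mul_nonsing_inv t htd]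
          rw [Finset.sum_congr rfl (fun i _ => by rw [hone i])]
          calc ∑ i, (1 : Matrix (Fin n) (Fin n) F) i k * Λ i j
              = (1 : Matrix (Fin n) (Fin n) F) k k * Λ k j := by
                apply Finset.sum_eq_single k
                · intro i _ hik
                  rw [Matrix.one_apply_ne hik, zero_mul]
                · intro h; exact absurd (Finset.mem_univ k) h
          _ = Λ k j := by rw [Matrix.one_apply_eq, one_mul]
  -- claim 2 : Λ (t r t⁻¹)ᵀ = Λ
  have claim2 : ∀ k i, (∑ j, Λ i j * (t * r * t⁻¹) k j) = Λ i k := by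
    intro k i
    calc ∑ j, Λ i j * (t * r * t⁻¹) k j
        = ∑ j, ∑ a, t k a * (Λ i j * (r * t⁻¹) a j) := by
          apply Finset.sum_congr rfl; intro j _
          rw [Matrix.mul_assoc, Matrix.mul_apply, Finset.mul_sum]
          apply Finset.sum_congr rfl; intro a _
          ring
    _ = ∑ a, ∑ j, t k a * (Λ i j * (r * t⁻¹) a j) := Finset.sum_comm
    _ = ∑ a, t k a * (∑ j, Λ i j * (r * t⁻¹) a j) := by
          apply Finset.sum_congr rfl; intro a _
          rw [Finset.mul_sum]
    _ = ∑ a, t k a * (∑ bb, r a bb * (∑ j, Λ i j * t⁻¹ bb j)) := by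
          apply Finset.sum_congr rfl; intro a _
          congr 1
          calc ∑ j, Λ i j * (r * t⁻¹) a j
              = ∑ j, ∑ bb, r a bb * (Λ i j * t⁻¹ bb j) := by
                apply Finset.sum_congr rfl; intro j _
                rw [Matrix.mul_apply, Finset.mul_sum]
                apply Finset.sum_congr rfl; intro bb _
                ring
          _ = ∑ bb, ∑ j, r a bb * (Λ i j * t⁻¹ bb j) := Finset.sum_comm
          _ = ∑ bb, r a bb * (∑ j, Λ i j * t⁻¹ bb j) := by
                apply Finset.sum_congr rfl; intro bb _
                rw [Finset.mul_sum]
    _ = ∑ a, t k a * (∑ j, Λ i j * t⁻¹ a j) := by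
          apply Finset.sum_congr rfl; intro a _
          congr 1
          calc ∑ bb, r a bb * (∑ j, Λ i j * t⁻¹ bb j)
              = ∑ bb, (if a = bb then (1:F) else 0) * (∑ j, Λ i j * t⁻¹ bb j) := by
                apply Finset.sum_congr rfl; intro bb _
                by_cases hB : ∃ τ, bb ∈ B τ
                · obtain ⟨τ, hbB⟩ := hB
                  rw [hcol τ bb hbB a]
                · push_neg at hB
                  rw [hV0 bb hB i, mul_zero, mul_zero]
          _ = ∑ bb, (if a = bb then (∑ j, Λ i j * t⁻¹ bb j) else 0) := by
                apply Finset.sum_congr rfl; intro bb _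
                split <;> simp
          _ = ∑ j, Λ i j * t⁻¹ a j := by
                rw [Finset.sum_ite_eq Finset.univ a (fun bb => ∑ j, Λ i j * t⁻¹ bb j),
                  if_pos (Finset.mem_univ a)]
    _ = ∑ j, Λ i j * (∑ a, t k a * t⁻¹ a j) := by
          calc ∑ a, t k a * (∑ j, Λ i j * t⁻¹ a j)
              = ∑ a, ∑ j, Λ i j * (t k a * t⁻¹ a j) := by
                apply Finset.sum_congr rfl; intro a _
                rw [Finset.mul_sum]
                apply Finset.sum_congr rfl; intro j _
                ring
          _ = ∑ j, ∑ a, Λ i j * (t k a * t⁻¹ a j) := Finset.sum_comm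
          _ = ∑ j, Λ i j * (∑ a, t k a * t⁻¹ a j) := by
                apply Finset.sum_congr rfl; intro j _
                rw [Finset.mul_sum]
    _ = Λ i k := by
          have hone : ∀ j, (∑ a, t k a * t⁻¹ a j) = (1 : Matrix (Fin n) (Fin n) F) k j := by
            intro j
            rw [← Matrix.mul_apply, Matrix.mul_nonsing_inv t htd]
          rw [Finset.sum_congr rfl (fun j _ => by rw [hone j])]
          calc ∑ j, Λ i j * (1 : Matrix (Fin n) (Fin n) F) k j
              = Λ i k * (1 : Matrix (Fin n) (Fin n) F) k k := by
                apply Finset.sum_eq_single k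
                · intro j _ hjk
                  rw [Matrix.one_apply_ne (Ne.symm hjk), mul_zero]
                · intro h; exact absurd (Finset.mem_univ k) h
          _ = Λ i k := by rw [Matrix.one_apply_eq, mul_one]
  -- shape of the conjugate
  have hρsh : ∀ i j, f i ≠ f j → (t * r * t⁻¹) i j = 0 := by
    intro i j hij
    rw [Matrix.mul_apply]
    apply Finset.sum_eq_zero
    intro bb _
    by_cases hbb : f bb = f j
    · have hz : (t * r) i bb = 0 := by
        rw [Matrix.mul_apply]
        apply Finset.sum_eq_zero
        intro a _
        by_cases hfa : f i = f a
        · rw [hr.1.2 a bb (by rw [← hfa, hbb]; exact hij), mul_zero]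
        · rw [htsh i a hfa, zero_mul]
      rw [hz, zero_mul]
    · rw [htinv_sh bb j hbb, mul_zero]
  refine ⟨⟨⟨(htu.mul hru).mul htinvu, hρsh⟩,
    fun x _ => ⟨lam_left_transfer Λ _ x claim1, lam_right_transfer Λ _ x claim2⟩⟩, ?_⟩
  intro b' t' hb' ht' hdec'
  rw [huniq b' t' hb' ht' hdec']
end
end

section
/- Let G be a finite group, H ≤ G a subgroup, and ξ, ξ' characters of H. If for every g₀ ∈ G there exists a subgroup H₀ ≤ H with g₀H₀g₀⁻¹ ⊆ H such that the characters h ↦ ξ(g₀hg₀⁻¹) and ξ'|_{H₀} are disjoint on H₀, then Ind_H^G ξ and Ind_H^G ξ' are disjoint characters of G. -/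
open scoped BigOperators Classical
open CategoryTheory.MonoidalCategory

noncomputable section

def IsChar (G : Type) [Group G] (χ : G → ℂ) : Prop :=
  ∃ V : FDRep ℂ G, χ = fun g => V.character g

def charInner (G : Type) [Group G] [Fintype G] (φ ψ : G → ℂ) : ℂ :=
  (Fintype.card G : ℂ)⁻¹ * ∑ g : G, φ g * (starRingEnd ℂ) (ψ g)

/-- The induced class function `Ind_H^G ξ`. -/
def indChar (G : Type) [Group G] [Fintype G] (H : Subgroup G) (ξ : H → ℂ) : G → ℂ :=
  fun g => (Nat.card H : ℂ)⁻¹ *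
    ∑ s : G, (if h : s⁻¹ * g * s ∈ H then ξ ⟨s⁻¹ * g * s, h⟩ else 0)

lemma sum_dite_subtype {G : Type} [Fintype G] (p : G → Prop) (f : {x : G // p x} → ℂ) :
    ∑ h : G, (if hk : p h then f ⟨h, hk⟩ else 0) = ∑ k : {x : G // p x}, f k := by
  classical
  have h1 : ∑ k : {x : G // p x}, f k
      = ∑ k : {x : G // p x}, (fun x => if hk : p x then f ⟨x, hk⟩ else 0) (k : G) := by
    apply Finset.sum_congr rfl; intro k _; simp [k.2]
  rw [h1, ← Finset.sum_subtype (Finset.univ.filter p) (by simp)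
      (fun x => if hk : p x then f ⟨x, hk⟩ else 0)]
  refine (Finset.sum_subset (Finset.filter_subset _ _) ?_).symm
  intro x _ hx
  simp only [Finset.mem_filter, Finset.mem_univ, true_and] at hx
  simp [hx]

lemma isChar_conj {G : Type} [Group G] (χ : G → ℂ) (h : IsChar G χ) :
    IsChar G (fun g => (starRingEnd ℂ) (χ g)) := by
  obtain ⟨V, rfl⟩ := h
  set n := Module.finrank ℂ V with hn
  let b : Module.Basis (Fin n) ℂ V := Module.finBasis ℂ V
  let ρ' : Representation ℂ G (Fin n → ℂ) :=
    { toFun := fun g => Matrix.toLin' ((LinearMap.toMatrix b b (V.ρ g)).map (starRingEnd ℂ))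
      map_one' := by simp; rfl
      map_mul' := by
        intro g₁ g₂
        rw [map_mul, Module.End.mul_eq_comp, LinearMap.toMatrix_comp b b b, Matrix.map_mul,
          Matrix.toLin'_mul]
        rfl }
  refine ⟨FDRep.of ρ', ?_⟩
  funext g
  show (starRingEnd ℂ) (V.character g) = (FDRep.of ρ').character g
  have h1 : (FDRep.of ρ').character g
      = LinearMap.trace ℂ (Fin n → ℂ) (ρ' g) := rfl
  rw [h1]
  show _ = LinearMap.trace ℂ (Fin n → ℂ)
      (Matrix.toLin' ((LinearMap.toMatrix b b (V.ρ g)).map (starRingEnd ℂ)))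
  rw [LinearMap.trace_eq_matrix_trace ℂ (Pi.basisFun ℂ (Fin n)),
    LinearMap.toMatrix_eq_toMatrix', LinearMap.toMatrix'_toLin']
  rw [show V.character g = LinearMap.trace ℂ V (V.ρ g) from rfl,
    LinearMap.trace_eq_matrix_trace ℂ b]
  simp [Matrix.trace, Matrix.diag, map_sum]

lemma isChar_comp {G K : Type} [Group G] [Group K] (f : K →* G) (χ : G → ℂ)
    (h : IsChar G χ) : IsChar K (fun k => χ (f k)) := by
  obtain ⟨V, rfl⟩ := h
  exact ⟨FDRep.of (V.ρ.comp f), rfl⟩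

lemma isChar_mul {G : Type} [Group G] (χ₁ χ₂ : G → ℂ) (h₁ : IsChar G χ₁) (h₂ : IsChar G χ₂) :
    IsChar G (fun g => χ₁ g * χ₂ g) := by
  obtain ⟨V, rfl⟩ := h₁
  obtain ⟨W, rfl⟩ := h₂
  refine ⟨V ⊗ W, ?_⟩
  funext g
  rw [FDRep.char_tensor]
  rfl

lemma char_sum_eq_zero {K : Type} [Group K] [Fintype K] (χ : K → ℂ) (hχ : IsChar K χ)
    (H₀ : Subgroup K) (h0 : ∑ h : H₀, χ h = 0) : ∑ k : K, χ k = 0 := by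
  obtain ⟨V, rfl⟩ := hχ
  have i1 : Invertible ((Fintype.card H₀ : ℂ)) :=
    invertibleOfNonzero (Nat.cast_ne_zero.mpr Fintype.card_ne_zero)
  have i2 : Invertible ((Fintype.card K : ℂ)) :=
    invertibleOfNonzero (Nat.cast_ne_zero.mpr Fintype.card_ne_zero)
  let W : FDRep ℂ H₀ := FDRep.of (V.ρ.comp H₀.subtype)
  have havg := FDRep.average_char_eq_finrank_invariants W
  have hsum0 : ∑ h : H₀, W.character h = 0 := by
    rw [show ∑ h : H₀, W.character h = ∑ h : H₀, V.character h from rfl]; exact h0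
  rw [hsum0, mul_zero] at havg
  have hfr : Module.finrank ℂ (Representation.invariants W.ρ) = 0 := by exact_mod_cast havg.symm
  have hbot : Representation.invariants W.ρ = ⊥ := Submodule.finrank_eq_zero.mp hfr
  have hle : Representation.invariants V.ρ ≤ Representation.invariants W.ρ := by
    intro v hv h
    exact hv h
  have hbotV : Representation.invariants V.ρ = ⊥ := le_bot_iff.mp (hbot ▸ hle)
  have havgV := FDRep.average_char_eq_finrank_invariants V
  rw [hbotV] at havgV
  have hz : (Nat.card K : ℂ)⁻¹ * ∑ k : K, V.character k = 0 := by
    rw [havgV]; simp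
  rcases mul_eq_zero.mp hz with h | h
  · exact absurd h (inv_ne_zero (by simp [Nat.card_eq_fintype_card, Fintype.card_ne_zero]))
  · exact h

/-- if for every `g₀ ∈ G` there is a subgroup `H₀ ≤ H` with
`g₀ H₀ g₀⁻¹ ⊆ H` on which the conjugated character `h ↦ ξ(g₀ h g₀⁻¹)` and `ξ'`
are disjoint, then the induced characters `Ind_H^G ξ` and `Ind_H^G ξ'` are disjoint. -/
theorem stmt15 (G : Type) [Group G] [Fintype G] (H : Subgroup G)
    (ξ ξ' : H → ℂ) (hξ : IsChar H ξ) (hξ' : IsChar H ξ')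
    (hmackey : ∀ g₀ : G, ∃ H₀ : Subgroup G, H₀ ≤ H ∧
      (∀ h ∈ H₀, g₀ * h * g₀⁻¹ ∈ H) ∧
      (Nat.card H₀ : ℂ)⁻¹ * ∑ h : G, (if hh : h ∈ H₀ then
          (if hc : g₀ * h * g₀⁻¹ ∈ H then ξ ⟨g₀ * h * g₀⁻¹, hc⟩ else 0) *
            (starRingEnd ℂ) (if hm : h ∈ H then ξ' ⟨h, hm⟩ else 0)
        else 0) = 0) :
    charInner G (indChar G H ξ) (indChar G H ξ') = 0 := by
  classical
  -- the summand as a function of (g₀, h)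
  set C : G → G → ℂ := fun g₀ h =>
    (if hc : g₀ * h * g₀⁻¹ ∈ H then ξ ⟨g₀ * h * g₀⁻¹, hc⟩ else 0) *
      (starRingEnd ℂ) (if hm : h ∈ H then ξ' ⟨h, hm⟩ else 0) with hC
  -- Key step: for each g₀ the full Mackey sum vanishes
  have key : ∀ g₀ : G, ∑ h : G, C g₀ h = 0 := by
    intro g₀
    obtain ⟨H₀, hle, hconj, hzero⟩ := hmackey g₀
    -- the intersection subgroup K
    set K : Subgroup G := H ⊓ Subgroup.comap (MulAut.conj g₀).toMonoidHom H with hK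
    have hmemK : ∀ x : G, x ∈ K ↔ x ∈ H ∧ g₀ * x * g₀⁻¹ ∈ H := by
      intro x
      simp [hK, Subgroup.mem_inf, Subgroup.mem_comap, MulAut.conj_apply]
    have hH₀K : H₀ ≤ K := by
      intro x hx
      exact (hmemK x).mpr ⟨hle hx, hconj x hx⟩
    -- the two homs K →* H
    let φ : K →* H :=
      { toFun := fun k => ⟨g₀ * k * g₀⁻¹, ((hmemK k).mp k.2).2⟩
        map_one' := by ext; simp
        map_mul' := by intro a b; ext; simp only [Subgroup.coe_mul]; group }
    let ψ : K →* H := Subgroup.inclusion (le_trans (le_of_eq hK) inf_le_left)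
    set χK : K → ℂ := fun k => ξ (φ k) * (starRingEnd ℂ) (ξ' (ψ k)) with hχK
    have hχKchar : IsChar K χK := by
      refine isChar_mul _ _ (isChar_comp φ ξ hξ) ?_
      exact isChar_comp ψ _ (isChar_conj ξ' hξ')
    -- rewrite the goal sum as a sum over K
    have hCK : ∀ h : G, C g₀ h = if hk : h ∈ K then χK ⟨h, hk⟩ else 0 := by
      intro h
      by_cases hk : h ∈ K
      · obtain ⟨h1, h2⟩ := (hmemK h).mp hk
        rw [dif_pos hk, hC, hχK]
        simp only [dif_pos h1, dif_pos h2]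
        rfl
      · rw [dif_neg hk, hC]
        by_cases h1 : h ∈ H
        · have h2 : ¬ (g₀ * h * g₀⁻¹ ∈ H) := fun h2 => hk ((hmemK h).mpr ⟨h1, h2⟩)
          simp [h2]
        · simp [h1]
    have hgoal : ∑ h : G, C g₀ h = ∑ k : K, χK k := by
      rw [Finset.sum_congr rfl (fun h _ => hCK h)]
      exact sum_dite_subtype (· ∈ K) (fun k => χK ⟨k.1, k.2⟩)
    rw [hgoal]
    -- the hypothesis sum as a sum over H₀ (inside K)
    have hsumH₀ : ∑ h : H₀.subgroupOf K, χK h = 0 := by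
      -- first convert hzero
      have hcard : (Nat.card H₀ : ℂ) ≠ 0 := by
        simp [Nat.card_eq_fintype_card, Fintype.card_ne_zero]
      have hz : ∑ h : G, (if hh : h ∈ H₀ then C g₀ h else 0) = 0 := by
        rcases mul_eq_zero.mp hzero with h | h
        · exact absurd h (inv_ne_zero hcard)
        · exact h
      have hz2 : ∑ h : H₀, C g₀ h = 0 := by
        rw [← sum_dite_subtype (· ∈ H₀) (fun k => C g₀ k.1)]
        exact hz
      have hpt : ∀ h : H₀, C g₀ (h : G) = χK ⟨h, hH₀K h.2⟩ := by
        intro h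
        rw [hCK (h : G), dif_pos (hH₀K h.2)]
      rw [Finset.sum_congr rfl (fun h _ => hpt h)] at hz2
      have heq : ∑ x : H₀.subgroupOf K, χK ↑x = ∑ h : H₀, χK ⟨h, hH₀K h.2⟩ := by
        apply Fintype.sum_equiv (Subgroup.subgroupOfEquivOfLe hH₀K).toEquiv
        intro x
        rfl
      rw [heq]
      exact hz2
    exact char_sum_eq_zero χK hχKchar (H₀.subgroupOf K) hsumH₀
  -- Now the combinatorial reduction
  unfold charInner indChar
  set c : ℂ := (Nat.card H : ℂ)⁻¹ with hc
  have hconjc : (starRingEnd ℂ) c = c := by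
    rw [hc, map_inv₀, map_natCast]
  have step1 : ∀ g : G,
      (c * ∑ s : G, (if h : s⁻¹ * g * s ∈ H then ξ ⟨s⁻¹ * g * s, h⟩ else 0)) *
        (starRingEnd ℂ) (c * ∑ t : G, (if h : t⁻¹ * g * t ∈ H then ξ' ⟨t⁻¹ * g * t, h⟩ else 0))
      = c * c * ∑ t : G, ∑ s : G,
          (if h : s⁻¹ * g * s ∈ H then ξ ⟨s⁻¹ * g * s, h⟩ else 0) *
            (starRingEnd ℂ) (if h : t⁻¹ * g * t ∈ H then ξ' ⟨t⁻¹ * g * t, h⟩ else 0) := by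
    intro g
    rw [map_mul, hconjc, map_sum, mul_mul_mul_comm, Finset.sum_mul_sum]
    rw [Finset.sum_comm]
  rw [Finset.sum_congr rfl (fun g _ => step1 g), ← Finset.mul_sum]
  -- triple sum
  set f : G → G → G → ℂ := fun g s t =>
    (if h : s⁻¹ * g * s ∈ H then ξ ⟨s⁻¹ * g * s, h⟩ else 0) *
      (starRingEnd ℂ) (if h : t⁻¹ * g * t ∈ H then ξ' ⟨t⁻¹ * g * t, h⟩ else 0) with hf
  have inner : ∀ t : G, ∑ g : G, ∑ s : G, f g s t = ∑ h : G, ∑ u : G, C u h := by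
    intro t
    let eg : G ≃ G :=
      { toFun := fun h => t * h * t⁻¹
        invFun := fun g => t⁻¹ * g * t
        left_inv := by intro x; group
        right_inv := by intro x; group }
    let es : G ≃ G :=
      { toFun := fun u => t * u⁻¹
        invFun := fun s => s⁻¹ * t
        left_inv := by intro x; group
        right_inv := by intro x; group }
    rw [← Equiv.sum_comp eg (fun g => ∑ s : G, f g s t)]
    apply Finset.sum_congr rfl
    intro h _
    rw [show ∑ s : G, f (eg h) s t = ∑ s : G, f (t * h * t⁻¹) s t from rfl]
    rw [← Equiv.sum_comp es (fun s => f (t * h * t⁻¹) s t)]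
    apply Finset.sum_congr rfl
    intro u _
    rw [show f (t * h * t⁻¹) (es u) t = f (t * h * t⁻¹) (t * u⁻¹) t from rfl]
    have e1 : (t * u⁻¹)⁻¹ * (t * h * t⁻¹) * (t * u⁻¹) = u * h * u⁻¹ := by group
    have e2 : t⁻¹ * (t * h * t⁻¹) * t = h := by group
    rw [hf, hC]
    simp only [e1, e2]
  have swap : ∑ g : G, ∑ t : G, ∑ s : G, f g s t = ∑ t : G, ∑ g : G, ∑ s : G, f g s t :=
    Finset.sum_comm
  have hzero' : ∑ h : G, ∑ u : G, C u h = 0 := by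
    rw [Finset.sum_comm]
    simp [key]
  rw [swap]
  rw [Finset.sum_congr rfl (fun t _ => inner t), hzero']
  simp
end
end
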